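/- arXiv:1509.08285 — 4 statements merged into one kernel-verified Lean document; each statement's English description precedes it below -/
import Mathlib

section
/- Let T be a terrain. Let g ∈ T lie in the interior of some edge of T, let p_r ∈ T lie in the interior of some edge of T with x(g) < x(p_r), and let g_r ∈ T with x(p_r) < x(g_r). Suppose g sees p_r and g_r sees p_r. Then every point p_ℓ ∈ T with x(p_ℓ) ≤ x(g) that is seen by g is also seen by g_r. -/
open Set

/-- A terrain: `n ≥ 2` vertices `v 0, …, v (n-1)` in `ℝ²` with strictly
increasing `x`-coordinates. -/
structure Terrain where
  n : ℕ
  hn : 2 ≤ n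
  v : ℕ → ℝ × ℝ
  mono : ∀ i j : ℕ, i < j → j < n → (v i).1 < (v j).1

namespace Terrain

/-- The edge `e_i = [v_i, v_{i+1}]` (meaningful for `i + 1 < n`). -/
def edge (T : Terrain) (i : ℕ) : Set (ℝ × ℝ) := segment ℝ (T.v i) (T.v (i + 1))

/-- The terrain as a subset of `ℝ²`: the union of its edges. -/
def carrier (T : Terrain) : Set (ℝ × ℝ) := ⋃ i ∈ Finset.range (T.n - 1), T.edge i

/-- The interior of the edge `e_i`: the edge minus its two endpoints. -/
def intEdge (T : Terrain) (i : ℕ) : Set (ℝ × ℝ) := T.edge i \ {T.v i, T.v (i + 1)}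

/-- `p` sees `q` iff every point of the segment `[p, q]` is nowhere strictly below
the terrain, i.e. every point of the segment lies on or above the terrain point
with the same `x`-coordinate. -/
def sees (T : Terrain) (p q : ℝ × ℝ) : Prop :=
  ∀ z ∈ segment ℝ p q, ∀ t ∈ T.carrier, t.1 = z.1 → t.2 ≤ z.2

/-- The visibility region `V(p) = {q ∈ T : p sees q}`. -/
def vis (T : Terrain) (p : ℝ × ℝ) : Set (ℝ × ℝ) := {q ∈ T.carrier | T.sees p q}

/-- `V(C) = ⋃_{g ∈ C} V(g)`. -/
def visSet (T : Terrain) (C : Set (ℝ × ℝ)) : Set (ℝ × ℝ) := ⋃ g ∈ C, T.vis g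

/-- `C ⊆ T` is a cover of the terrain iff `V(C) = T`. -/
def IsCover (T : Terrain) (C : Set (ℝ × ℝ)) : Prop :=
  C ⊆ T.carrier ∧ T.visSet C = T.carrier

/-- The vertex set `V = {v_1, …, v_n}`. -/
def vertexSet (T : Terrain) : Set (ℝ × ℝ) := {p | ∃ i < T.n, p = T.v i}

/-- Edge `e_i` is critical w.r.t. `g ∈ C`: `C \ {g}` covers some part of,
but not all of, `int(e_i)`. -/
def IsCriticalWrt (T : Terrain) (C : Set (ℝ × ℝ)) (g : ℝ × ℝ) (i : ℕ) : Prop :=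
  (T.visSet (C \ {g}) ∩ T.intEdge i).Nonempty ∧ ¬ T.intEdge i ⊆ T.visSet (C \ {g})

/-- `g` is a left-guard of `e_i`: `x(g) < x(v_i)` and `e_i` is critical w.r.t. `g`. -/
def IsLeftGuard (T : Terrain) (C : Set (ℝ × ℝ)) (g : ℝ × ℝ) (i : ℕ) : Prop :=
  g.1 < (T.v i).1 ∧ T.IsCriticalWrt C g i

/-- `g` is a right-guard of `e_i`: `x(v_{i+1}) < x(g)` and `e_i` is critical w.r.t. `g`. -/
def IsRightGuard (T : Terrain) (C : Set (ℝ × ℝ)) (g : ℝ × ℝ) (i : ℕ) : Prop :=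
  (T.v (i + 1)).1 < g.1 ∧ T.IsCriticalWrt C g i

/-- `q` is extremal in `V(p)`: `q ∈ V(p)` and `q` has maximal or minimal
`x`-coordinate within its connected component of `V(p)`. -/
def Extremal (T : Terrain) (p q : ℝ × ℝ) : Prop :=
  q ∈ T.vis p ∧
    ((∀ r ∈ connectedComponentIn (T.vis p) q, r.1 ≤ q.1) ∨
     (∀ r ∈ connectedComponentIn (T.vis p) q, q.1 ≤ r.1))

/-- The guard candidate set `U`: all vertices together with the extremal points
of the vertices' visibility regions. -/
def Uset (T : Terrain) : Set (ℝ × ℝ) :=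
  T.vertexSet ∪ ⋃ i ∈ Finset.range T.n, {q | T.Extremal (T.v i) q}

/-- `OPT(G, W)`: the minimum cardinality of a finite `C ⊆ G` with `W ⊆ V(C)`. -/
noncomputable def OPT (T : Terrain) (G W : Set (ℝ × ℝ)) : ℕ :=
  sInf {k | ∃ C : Finset (ℝ × ℝ), ↑C ⊆ G ∧ W ⊆ T.visSet ↑C ∧ C.card = k}

end Terrain

lemma chord_F {x0 x1 x2 x3 y0 y1 y2 y3 : ℝ}
    (h01 : x0 ≤ x1) (h12 : x1 < x2) (h23 : x2 < x3)
    (S1 : (y1-y0)*(x2-x1) ≤ (y2-y1)*(x1-x0))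
    (S2 : (y2-y1)*(x3-x2) ≤ (y3-y2)*(x2-x1)) :
    y1*(x3-x0) ≤ y0*(x3-x1) + y3*(x1-x0) ∧
    y2*(x3-x0) ≤ y0*(x3-x2) + y3*(x2-x0) := by
  have hA := mul_le_mul_of_nonneg_right S1 (by linarith : (0:ℝ) ≤ x3 - x2)
  have hB := mul_le_mul_of_nonneg_right S2 (by linarith : (0:ℝ) ≤ x1 - x0)
  have step : (y1-y0)*(x3-x2) ≤ (y3-y2)*(x1-x0) := by
    nlinarith [hA, hB, h12]
  constructor
  · nlinarith [S1, step]
  · nlinarith [S2, step]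

lemma chord_left {x0 x1 x2 x3 y0 y1 y2 y3 x zz ww : ℝ}
    (h01 : x0 ≤ x1) (h12 : x1 < x2) (h23 : x2 < x3)
    (S1 : (y1-y0)*(x2-x1) ≤ (y2-y1)*(x1-x0))
    (S2 : (y2-y1)*(x3-x2) ≤ (y3-y2)*(x2-x1))
    (hx0 : x0 ≤ x) (hx1 : x ≤ x1) (h01' : x0 < x1)
    (Ez : zz*(x3-x0) = y0*(x3-x) + y3*(x-x0))
    (Ew : ww*(x1-x0) = y0*(x1-x) + y1*(x-x0)) : ww ≤ zz := by
  obtain ⟨F1, F2⟩ := chord_F h01 h12 h23 S1 S2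
  have hF := mul_le_mul_of_nonneg_left F1 (by linarith : (0:ℝ) ≤ x - x0)
  have Ez' : zz*((x1-x0)*(x3-x0)) = (y0*(x3-x) + y3*(x-x0))*(x1-x0) := by
    linear_combination (x1-x0) * Ez
  have Ew' : ww*((x1-x0)*(x3-x0)) = (y0*(x1-x) + y1*(x-x0))*(x3-x0) := by
    linear_combination (x3-x0) * Ew
  have key : ww * ((x1-x0)*(x3-x0)) ≤ zz * ((x1-x0)*(x3-x0)) := by
    nlinarith [hF, Ez', Ew']
  exact le_of_mul_le_mul_right key (by nlinarith)

lemma chord_mid {x0 x1 x2 x3 y0 y1 y2 y3 x zz ww : ℝ}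
    (h01 : x0 ≤ x1) (h12 : x1 < x2) (h23 : x2 < x3)
    (S1 : (y1-y0)*(x2-x1) ≤ (y2-y1)*(x1-x0))
    (S2 : (y2-y1)*(x3-x2) ≤ (y3-y2)*(x2-x1))
    (hx1 : x1 ≤ x) (hx2 : x ≤ x2)
    (Ez : zz*(x3-x0) = y0*(x3-x) + y3*(x-x0))
    (Ew : ww*(x2-x1) = y1*(x2-x) + y2*(x-x1)) : ww ≤ zz := by
  obtain ⟨F1, F2⟩ := chord_F h01 h12 h23 S1 S2
  have hF1 := mul_le_mul_of_nonneg_left F1 (by linarith : (0:ℝ) ≤ x2 - x)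
  have hF2 := mul_le_mul_of_nonneg_left F2 (by linarith : (0:ℝ) ≤ x - x1)
  have Ez' : zz*((x2-x1)*(x3-x0)) = (y0*(x3-x) + y3*(x-x0))*(x2-x1) := by
    linear_combination (x2-x1) * Ez
  have Ew' : ww*((x2-x1)*(x3-x0)) = (y1*(x2-x) + y2*(x-x1))*(x3-x0) := by
    linear_combination (x3-x0) * Ew
  have key : ww * ((x2-x1)*(x3-x0)) ≤ zz * ((x2-x1)*(x3-x0)) := by
    nlinarith [hF1, hF2, Ez', Ew']
  exact le_of_mul_le_mul_right key (by nlinarith)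

lemma chord_right {x0 x1 x2 x3 y0 y1 y2 y3 x zz ww : ℝ}
    (h01 : x0 ≤ x1) (h12 : x1 < x2) (h23 : x2 < x3)
    (S1 : (y1-y0)*(x2-x1) ≤ (y2-y1)*(x1-x0))
    (S2 : (y2-y1)*(x3-x2) ≤ (y3-y2)*(x2-x1))
    (hx2 : x2 ≤ x) (hx3 : x ≤ x3)
    (Ez : zz*(x3-x0) = y0*(x3-x) + y3*(x-x0))
    (Ew : ww*(x3-x2) = y2*(x3-x) + y3*(x-x2)) : ww ≤ zz := by
  obtain ⟨F1, F2⟩ := chord_F h01 h12 h23 S1 S2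
  have hF2 := mul_le_mul_of_nonneg_left F2 (by linarith : (0:ℝ) ≤ x3 - x)
  have Ez' : zz*((x3-x2)*(x3-x0)) = (y0*(x3-x) + y3*(x-x0))*(x3-x2) := by
    linear_combination (x3-x2) * Ez
  have Ew' : ww*((x3-x2)*(x3-x0)) = (y2*(x3-x) + y3*(x-x2))*(x3-x0) := by
    linear_combination (x3-x0) * Ew
  have key : ww * ((x3-x2)*(x3-x0)) ≤ zz * ((x3-x2)*(x3-x0)) := by
    nlinarith [hF2, Ez', Ew']
  exact le_of_mul_le_mul_right key (by nlinarith)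


lemma seg_param {p q z : ℝ × ℝ} (h : z ∈ segment ℝ p q) :
    ∃ s : ℝ, 0 ≤ s ∧ s ≤ 1 ∧ z.1 = (1-s)*p.1 + s*q.1 ∧ z.2 = (1-s)*p.2 + s*q.2 := by
  obtain ⟨a, b, ha, hb, hab, rfl⟩ := h
  have hA : a = 1 - b := by linarith
  subst hA
  exact ⟨b, hb, by linarith, by simp [Prod.fst_add, Prod.smul_fst, smul_eq_mul],
    by simp [Prod.snd_add, Prod.smul_snd, smul_eq_mul]⟩

lemma seg_mk (p q : ℝ × ℝ) {s : ℝ} (h0 : 0 ≤ s) (h1 : s ≤ 1) :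
    ((1-s)*p.1 + s*q.1, (1-s)*p.2 + s*q.2) ∈ segment ℝ p q := by
  refine ⟨1-s, s, by linarith, h0, by ring, ?_⟩
  ext <;> simp [Prod.smul_fst, Prod.smul_snd, smul_eq_mul]

lemma seg_at {p q : ℝ × ℝ} (hlt : p.1 < q.1) {x : ℝ} (h1 : p.1 ≤ x) (h2 : x ≤ q.1) :
    ∃ w ∈ segment ℝ p q, w.1 = x ∧
      w.2 * (q.1 - p.1) = p.2 * (q.1 - x) + q.2 * (x - p.1) := by
  set s := (x - p.1)/(q.1 - p.1) with hs
  have hd : 0 < q.1 - p.1 := by linarith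
  have h0 : 0 ≤ s := div_nonneg (by linarith) hd.le
  have h1' : s ≤ 1 := by rw [hs, div_le_one hd]; linarith
  refine ⟨_, seg_mk p q h0 h1', ?_, ?_⟩
  · show (1-s)*p.1 + s*q.1 = x
    have key : s * (q.1 - p.1) = x - p.1 := by rw [hs]; exact div_mul_cancel₀ _ hd.ne'
    linear_combination key
  · show ((1-s)*p.2 + s*q.2) * (q.1 - p.1) = p.2 * (q.1 - x) + q.2 * (x - p.1)
    have key : s * (q.1 - p.1) = x - p.1 := by rw [hs]; exact div_mul_cancel₀ _ hd.ne'
    linear_combination (q.2 - p.2) * key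

lemma mem_carrier (T : Terrain) {i : ℕ} (hi : i + 1 < T.n) {p : ℝ × ℝ}
    (hp : p ∈ T.edge i) : p ∈ T.carrier := by
  exact Set.mem_iUnion₂.mpr ⟨i, Finset.mem_range.mpr (by omega), hp⟩

lemma sees_symm {T : Terrain} {p q : ℝ × ℝ} (h : T.sees p q) : T.sees q p := by
  intro z hz
  rw [segment_symm] at hz
  exact h z hz

lemma intEdge_x (T : Terrain) {j : ℕ} (hj : j + 1 < T.n) {p : ℝ × ℝ}
    (hp : p ∈ T.intEdge j) :
    (T.v j).1 < p.1 ∧ p.1 < (T.v (j+1)).1 ∧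
      ∃ s : ℝ, 0 < s ∧ s < 1 ∧ p.1 = (1-s)*(T.v j).1 + s*(T.v (j+1)).1 ∧
        p.2 = (1-s)*(T.v j).2 + s*(T.v (j+1)).2 := by
  obtain ⟨hseg, hne⟩ := hp
  obtain ⟨s, h0, h1, hx, hy⟩ := seg_param hseg
  have hΔ : (T.v j).1 < (T.v (j+1)).1 := T.mono j (j+1) (by omega) hj
  simp only [Set.mem_insert_iff, Set.mem_singleton_iff, not_or] at hne
  have hs0 : s ≠ 0 := by
    rintro rfl
    exact hne.1 (Prod.ext (by simpa using hx) (by simpa using hy))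
  have hs1 : s ≠ 1 := by
    rintro rfl
    exact hne.2 (Prod.ext (by simpa using hx) (by simpa using hy))
  have h0' : 0 < s := lt_of_le_of_ne h0 (Ne.symm hs0)
  have h1' : s < 1 := lt_of_le_of_ne h1 hs1
  exact ⟨by nlinarith, by nlinarith, s, h0', h1', hx, hy⟩

lemma slope_left (T : Terrain) {j : ℕ} (hj : j + 1 < T.n) {p a : ℝ × ℝ}
    (hp : p ∈ T.intEdge j) (ha : a.1 < p.1) (hs : T.sees a p) :
    (p.2 - a.2) * ((T.v (j+1)).1 - (T.v j).1) ≤ ((T.v (j+1)).2 - (T.v j).2) * (p.1 - a.1) := by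
  obtain ⟨hxl, hxr, s, hs0, hs1, hp1, hp2⟩ := intEdge_x T hj hp
  have hΔ : (T.v j).1 < (T.v (j+1)).1 := T.mono j (j+1) (by omega) hj
  set m := max a.1 (T.v j).1 with hm
  have hm1 : a.1 ≤ m := le_max_left _ _
  have hm2 : (T.v j).1 ≤ m := le_max_right _ _
  have hm3 : m < p.1 := max_lt ha hxl
  obtain ⟨w, hwseg, hw1, hw2⟩ := seg_at hΔ hm2 (by linarith : m ≤ (T.v (j+1)).1)
  obtain ⟨z, hzseg, hz1, hz2⟩ := seg_at ha hm1 hm3.le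
  have hwz : w.2 ≤ z.2 := hs z hzseg w (mem_carrier T hj hwseg) (hw1.trans hz1.symm)
  -- (p.2 - z.2)*(p.1 - a.1) = (p.2 - a.2)*(p.1 - m)
  have EqA : (p.2 - z.2)*(p.1 - a.1) = (p.2 - a.2)*(p.1 - m) := by linear_combination -hz2
  have EqB : (p.2 - w.2)*((T.v (j+1)).1 - (T.v j).1) = ((T.v (j+1)).2 - (T.v j).2)*(p.1 - m) := by
    linear_combination -hw2 + ((T.v (j+1)).1 - (T.v j).1) * hp2 - ((T.v (j+1)).2 - (T.v j).2) * hp1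
  have h1 : (p.2 - z.2) * ((p.1 - a.1) * ((T.v (j+1)).1 - (T.v j).1)) ≤
      (p.2 - w.2) * ((p.1 - a.1) * ((T.v (j+1)).1 - (T.v j).1)) := by
    exact mul_le_mul_of_nonneg_right (by linarith)
      (mul_nonneg (by linarith) (by linarith))
  have key : (p.2 - a.2) * ((T.v (j+1)).1 - (T.v j).1) * (p.1 - m) ≤
      ((T.v (j+1)).2 - (T.v j).2) * (p.1 - a.1) * (p.1 - m) := by
    nlinarith [EqA, EqB, h1]
  exact le_of_mul_le_mul_right key (by linarith)

lemma slope_right (T : Terrain) {j : ℕ} (hj : j + 1 < T.n) {p b : ℝ × ℝ}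
    (hp : p ∈ T.intEdge j) (hb : p.1 < b.1) (hs : T.sees b p) :
    ((T.v (j+1)).2 - (T.v j).2) * (b.1 - p.1) ≤ (b.2 - p.2) * ((T.v (j+1)).1 - (T.v j).1) := by
  obtain ⟨hxl, hxr, s, hs0, hs1, hp1, hp2⟩ := intEdge_x T hj hp
  have hΔ : (T.v j).1 < (T.v (j+1)).1 := T.mono j (j+1) (by omega) hj
  set m := min b.1 (T.v (j+1)).1 with hm
  have hm1 : m ≤ b.1 := min_le_left _ _
  have hm2 : m ≤ (T.v (j+1)).1 := min_le_right _ _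
  have hm3 : p.1 < m := lt_min hb hxr
  obtain ⟨w, hwseg, hw1, hw2⟩ := seg_at hΔ (by linarith : (T.v j).1 ≤ m) hm2
  obtain ⟨z, hzseg, hz1, hz2⟩ := seg_at hb hm3.le hm1
  have hwz : w.2 ≤ z.2 := by
    have := sees_symm hs
    exact this z hzseg w (mem_carrier T hj hwseg) (hw1.trans hz1.symm)
  have EqA : (z.2 - p.2)*(b.1 - p.1) = (b.2 - p.2)*(m - p.1) := by linear_combination hz2
  have EqB : (w.2 - p.2)*((T.v (j+1)).1 - (T.v j).1) = ((T.v (j+1)).2 - (T.v j).2)*(m - p.1) := by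
    linear_combination hw2 - ((T.v (j+1)).1 - (T.v j).1) * hp2 + ((T.v (j+1)).2 - (T.v j).2) * hp1
  have h1 : (w.2 - p.2) * ((b.1 - p.1) * ((T.v (j+1)).1 - (T.v j).1)) ≤
      (z.2 - p.2) * ((b.1 - p.1) * ((T.v (j+1)).1 - (T.v j).1)) := by
    exact mul_le_mul_of_nonneg_right (by linarith)
      (mul_nonneg (by linarith) (by linarith))
  have key : ((T.v (j+1)).2 - (T.v j).2) * (b.1 - p.1) * (m - p.1) ≤
      (b.2 - p.2) * ((T.v (j+1)).1 - (T.v j).1) * (m - p.1) := by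
    nlinarith [EqA, EqB, h1]
  exact le_of_mul_le_mul_right key (by linarith)

lemma slopeB (T : Terrain) {j : ℕ} (hj : j + 1 < T.n) {p a b : ℝ × ℝ}
    (hp : p ∈ T.intEdge j) (ha : a.1 < p.1) (hb : p.1 < b.1)
    (hsa : T.sees a p) (hsb : T.sees b p) :
    (p.2 - a.2) * (b.1 - p.1) ≤ (b.2 - p.2) * (p.1 - a.1) := by
  have hL := slope_left T hj hp ha hsa
  have hR := slope_right T hj hp hb hsb
  have hΔ : (T.v j).1 < (T.v (j+1)).1 := T.mono j (j+1) (by omega) hj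
  have h1 := mul_le_mul_of_nonneg_right hL (by linarith : (0:ℝ) ≤ b.1 - p.1)
  have h2 := mul_le_mul_of_nonneg_right hR (by linarith : (0:ℝ) ≤ p.1 - a.1)
  have key : (p.2 - a.2) * (b.1 - p.1) * ((T.v (j+1)).1 - (T.v j).1) ≤
      (b.2 - p.2) * (p.1 - a.1) * ((T.v (j+1)).1 - (T.v j).1) := by nlinarith [h1, h2]
  exact le_of_mul_le_mul_right key (by linarith)


/-- Let `g` and `p_r` lie in interiors of edges with `x(g) < x(p_r)`,
let `g_r ∈ T` with `x(p_r) < x(g_r)`, and suppose `g` sees `p_r` and `g_r` sees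
`p_r`. Then every `p_ℓ ∈ T` with `x(p_ℓ) ≤ x(g)` seen by `g` is also seen by `g_r`. -/
theorem convex_chain_domination (T : Terrain) (g pr gr : ℝ × ℝ)
    (hg : ∃ i, i + 1 < T.n ∧ g ∈ T.intEdge i)
    (hpr : ∃ j, j + 1 < T.n ∧ pr ∈ T.intEdge j)
    (hgr : gr ∈ T.carrier)
    (hx1 : g.1 < pr.1) (hx2 : pr.1 < gr.1)
    (hsee1 : T.sees g pr) (hsee2 : T.sees gr pr) :
    ∀ pl ∈ T.carrier, pl.1 ≤ g.1 → T.sees g pl → T.sees gr pl := by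

  intro pl hpl hplx hseegpl
  obtain ⟨i, hi, hgi⟩ := hg
  obtain ⟨j, hj, hpj⟩ := hpr
  have hgc : g ∈ T.carrier := mem_carrier T hi hgi.1
  have S2 : (pr.2 - g.2) * (gr.1 - pr.1) ≤ (gr.2 - pr.2) * (pr.1 - g.1) :=
    slopeB T hj hpj hx1 hx2 hsee1 hsee2
  have S1 : (g.2 - pl.2) * (pr.1 - g.1) ≤ (pr.2 - g.2) * (g.1 - pl.1) := by
    rcases lt_or_eq_of_le hplx with h | h
    · exact slopeB T hi hgi h hx1 (sees_symm hseegpl) (sees_symm hsee1)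
    · have h1 : g.2 ≤ pl.2 := hseegpl pl (right_mem_segment ℝ g pl) g hgc h.symm
      have h2 : pl.2 ≤ g.2 := hseegpl g (left_mem_segment ℝ g pl) pl hpl h
      have h3 : pl.2 = g.2 := le_antisymm h2 h1
      rw [h3, h]
      simp
  intro z hz t ht htx
  rw [segment_symm] at hz
  obtain ⟨s, hs0, hs1, hz1, hz2⟩ := seg_param hz
  have hplgr : pl.1 < gr.1 := by linarith
  have Ez : z.2 * (gr.1 - pl.1) = pl.2 * (gr.1 - z.1) + gr.2 * (z.1 - pl.1) := by
    rw [hz1, hz2]; ring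
  have hzl : pl.1 ≤ z.1 := by rw [hz1]; nlinarith
  have hzr : z.1 ≤ gr.1 := by rw [hz1]; nlinarith
  rcases lt_or_ge z.1 g.1 with hc | hc
  · have hplg : pl.1 < g.1 := lt_of_le_of_lt hzl hc
    obtain ⟨w, hwseg, hw1, hw2⟩ := seg_at hplg hzl hc.le
    have htw : t.2 ≤ w.2 := hseegpl w (by rwa [segment_symm]) t ht (htx.trans hw1.symm)
    have hwz : w.2 ≤ z.2 := chord_left hplx hx1 hx2 S1 S2 hzl hc.le hplg Ez hw2
    linarith
  · rcases le_or_gt z.1 pr.1 with hc2 | hc2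
    · obtain ⟨w, hwseg, hw1, hw2⟩ := seg_at hx1 hc hc2
      have htw : t.2 ≤ w.2 := hsee1 w hwseg t ht (htx.trans hw1.symm)
      have hwz : w.2 ≤ z.2 := chord_mid hplx hx1 hx2 S1 S2 hc hc2 Ez hw2
      linarith
    · obtain ⟨w, hwseg, hw1, hw2⟩ := seg_at hx2 hc2.le hzr
      have htw : t.2 ≤ w.2 := hsee2 w (by rwa [segment_symm]) t ht (htx.trans hw1.symm)
      have hwz : w.2 ≤ z.2 := chord_right hplx hx1 hx2 S1 S2 hc2.le hzr Ez hw2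
      linarith
end

section
/- Let T be a terrain with n vertices and let G ⊆ T be a finite set of guard candidates with V(G) = T. Then there exists a finite set W ⊆ T with |W| ≤ 4·n·|G| + 1 such that: (i) for every point w ∈ T there exists w' ∈ W with {g ∈ G : g sees w'} ⊆ {g ∈ G : g sees w}; (ii) every C ⊆ G with W ⊆ V(C) satisfies V(C) = T (i.e., every set feasible for TGP(G, W) is feasible for TGP(G, T)); and (iii) OPT(G, W) = OPT(G, T). -/
open Set

namespace Terrain

variable (T : Terrain)

def xc (j : ℕ) : ℝ := (T.v j).1
def yc (j : ℕ) : ℝ := (T.v j).2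

lemma xc_lt {i j : ℕ} (hij : i < j) (hj : j < T.n) : T.xc i < T.xc j := T.mono i j hij hj

lemma xc_le {i j : ℕ} (hij : i ≤ j) (hj : j < T.n) : T.xc i ≤ T.xc j := by
  rcases eq_or_lt_of_le hij with h | h
  · simp [h]
  · exact (T.xc_lt h hj).le

lemma edge_sub_carrier {i : ℕ} (hi : i + 1 < T.n) : T.edge i ⊆ T.carrier := by
  intro p hp
  have : i ∈ Finset.range (T.n - 1) := by
    simp only [Finset.mem_range]; omega
  exact Set.mem_biUnion this hp

lemma mem_edge_iff {p : ℝ × ℝ} {i : ℕ} :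
    p ∈ T.edge i ↔ ∃ t ∈ Icc (0:ℝ) 1, p = (1 - t) • T.v i + t • T.v (i+1) := by
  rw [edge, segment_eq_image]
  constructor
  · rintro ⟨t, ht, rfl⟩; exact ⟨t, ht, rfl⟩
  · rintro ⟨t, ht, rfl⟩; exact ⟨t, ht, rfl⟩

lemma combo_fst (a b : ℝ × ℝ) (t : ℝ) : ((1 - t) • a + t • b).1 = (1 - t) * a.1 + t * b.1 := rfl

lemma combo_snd (a b : ℝ × ℝ) (t : ℝ) : ((1 - t) • a + t • b).2 = (1 - t) * a.2 + t * b.2 := rfl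

lemma vertex_mem_carrier {j : ℕ} (hj : j < T.n) : T.v j ∈ T.carrier := by
  rcases lt_or_ge j (T.n - 1) with h | h
  · have : j + 1 < T.n := by omega
    exact T.edge_sub_carrier this (left_mem_segment ℝ _ _)
  · have hj' : j = T.n - 1 := by omega
    have h2 : T.n - 2 + 1 < T.n := by have := T.hn; omega
    have h3 : T.n - 2 + 1 = j := by have := T.hn; omega
    have := T.edge_sub_carrier h2 (right_mem_segment ℝ (T.v (T.n-2)) (T.v (T.n - 2 + 1)))
    rwa [h3] at this

lemma edge_x_bounds {p : ℝ × ℝ} {i : ℕ} (hi : i + 1 < T.n) (hp : p ∈ T.edge i) :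
    T.xc i ≤ p.1 ∧ p.1 ≤ T.xc (i+1) := by
  rcases T.mem_edge_iff.1 hp with ⟨t, ⟨ht0, ht1⟩, rfl⟩
  rw [combo_fst]
  have hlt : T.xc i ≤ T.xc (i+1) := T.xc_le (by omega) hi
  simp only [xc] at hlt ⊢
  constructor <;> nlinarith

lemma carrier_x_bounds {p : ℝ × ℝ} (hp : p ∈ T.carrier) :
    T.xc 0 ≤ p.1 ∧ p.1 ≤ T.xc (T.n - 1) := by
  rcases Set.mem_iUnion₂.1 hp with ⟨i, hi, hpe⟩
  rw [Finset.mem_range] at hi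
  have hi' : i + 1 < T.n := by omega
  have := T.edge_x_bounds hi' hpe
  constructor
  · exact le_trans (T.xc_le (Nat.zero_le i) (by omega)) this.1
  · exact le_trans this.2 (T.xc_le (by omega) (by have := T.hn; omega))

lemma carrier_unique {p q : ℝ × ℝ} (hp : p ∈ T.carrier) (hq : q ∈ T.carrier)
    (hx : p.1 = q.1) : p = q := by
  -- wlog on edge indices
  rcases Set.mem_iUnion₂.1 hp with ⟨i, hi, hpe⟩
  rcases Set.mem_iUnion₂.1 hq with ⟨i', hi', hqe⟩
  rw [Finset.mem_range] at hi hi'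
  have hin : i + 1 < T.n := by omega
  have hin' : i' + 1 < T.n := by omega
  clear hp hq
  -- key sub-claim, symmetric in roles
  have key : ∀ (a b : ℕ), a + 1 < T.n → b + 1 < T.n → a ≤ b →
      ∀ p q : ℝ × ℝ, p ∈ T.edge a → q ∈ T.edge b → p.1 = q.1 → p = q := by
    intro a b ha hb hab p q hpa hqb hpq
    rcases T.mem_edge_iff.1 hpa with ⟨s, ⟨hs0, hs1⟩, rfl⟩
    rcases T.mem_edge_iff.1 hqb with ⟨u, ⟨hu0, hu1⟩, rfl⟩
    rw [combo_fst, combo_fst] at hpq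
    rcases Nat.eq_or_lt_of_le hab with rfl | hab'
    · have hne : T.xc a < T.xc (a+1) := T.xc_lt (by omega) ha
      have hsu : s = u := by
        have : s * (T.xc (a+1) - T.xc a) = u * (T.xc (a+1) - T.xc a) := by
          unfold xc at *; nlinarith
        have hne' : T.xc (a+1) - T.xc a ≠ 0 := by linarith
        exact mul_right_cancel₀ hne' this
      subst hsu; rfl
    · -- a < b : forced to common endpoint
      have h1 : T.xc (a+1) ≤ T.xc b := T.xc_le (by omega) (by omega)
      have hpa1 : ((1-s) • T.v a + s • T.v (a+1)).1 ≤ T.xc (a+1) :=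
        (T.edge_x_bounds ha (by rw [T.mem_edge_iff]; exact ⟨s, ⟨hs0, hs1⟩, rfl⟩)).2
      have hqb1 : T.xc b ≤ ((1-u) • T.v b + u • T.v (b+1)).1 :=
        (T.edge_x_bounds hb (by rw [T.mem_edge_iff]; exact ⟨u, ⟨hu0, hu1⟩, rfl⟩)).1
      rw [combo_fst] at hpa1 hqb1
      have heq : T.xc (a+1) = T.xc b := by unfold xc at *; nlinarith
      have hab1 : a + 1 = b := by
        by_contra hne
        have : T.xc (a+1) < T.xc b := T.xc_lt (by omega) (by omega)
        linarith
      have hs : s = 1 := by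
        have hlt : T.xc a < T.xc (a+1) := T.xc_lt (by omega) ha
        unfold xc at *; nlinarith
      have hu : u = 0 := by
        have hlt : T.xc b < T.xc (b+1) := T.xc_lt (by omega) hb
        unfold xc at *; nlinarith
      subst hs hu hab1
      simp
  rcases le_total i i' with h | h
  · exact key i i' hin hin' h p q hpe hqe hx
  · exact (key i' i hin' hin h q p hqe hpe hx.symm).symm

lemma exists_edge_idx {u : ℝ} (h0 : T.xc 0 ≤ u) (h1 : u ≤ T.xc (T.n - 1)) :
    ∃ i, i + 1 < T.n ∧ T.xc i ≤ u ∧ u ≤ T.xc (i+1) := by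
  have hn := T.hn
  set S := (Finset.range (T.n - 1)).filter (fun i => T.xc i ≤ u) with hS
  have hSne : S.Nonempty := ⟨0, by
    simp only [hS, Finset.mem_filter, Finset.mem_range]
    exact ⟨by omega, h0⟩⟩
  set i := S.max' hSne with hi
  have hiS : i ∈ S := S.max'_mem hSne
  simp only [hS, Finset.mem_filter, Finset.mem_range] at hiS
  refine ⟨i, by omega, hiS.2, ?_⟩
  by_contra hcon
  push_neg at hcon
  rcases lt_or_ge (i+1) (T.n - 1) with h | h
  · have : i + 1 ∈ S := by simp [hS]; exact ⟨h, hcon.le⟩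
    have := S.le_max' _ this
    omega
  · have : i + 1 = T.n - 1 := by omega
    rw [this] at hcon; linarith

open Classical in
noncomputable def hfun (u : ℝ) : ℝ := if h : ∃ y, (u, y) ∈ T.carrier then h.choose else 0

lemma point_on_edge {i : ℕ} (hi : i + 1 < T.n) {u : ℝ} (h0 : T.xc i ≤ u) (h1 : u ≤ T.xc (i+1)) :
    (u, T.yc i + (T.yc (i+1) - T.yc i) / (T.xc (i+1) - T.xc i) * (u - T.xc i)) ∈ T.edge i := by
  have hlt : T.xc i < T.xc (i+1) := T.xc_lt (by omega) hi
  set t := (u - T.xc i) / (T.xc (i+1) - T.xc i) with ht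
  rw [T.mem_edge_iff]
  refine ⟨t, ⟨div_nonneg (by linarith) (by linarith), by
    rw [ht, div_le_one (by linarith)]; linarith⟩, ?_⟩
  have hne : T.xc (i+1) - T.xc i ≠ 0 := by linarith
  apply Prod.ext
  · rw [combo_fst]; show u = _; unfold xc at *
    have hτ : t * ((T.v (i+1)).1 - (T.v i).1) = u - (T.v i).1 := by rw [ht]; exact div_mul_cancel₀ _ hne
    linear_combination -hτ
  · rw [combo_snd]; show _ = _; unfold xc yc at *; rw [ht]; ring

lemma hfun_mem {u : ℝ} (h0 : T.xc 0 ≤ u) (h1 : u ≤ T.xc (T.n - 1)) :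
    (u, T.hfun u) ∈ T.carrier := by
  obtain ⟨i, hi, hl, hr⟩ := T.exists_edge_idx h0 h1
  have hex : ∃ y, (u, y) ∈ T.carrier := ⟨_, T.edge_sub_carrier hi (T.point_on_edge hi hl hr)⟩
  rw [hfun, dif_pos hex]
  exact hex.choose_spec

lemma hfun_eq {u y : ℝ} (h : (u, y) ∈ T.carrier) : T.hfun u = y := by
  have hex : ∃ y', (u, y') ∈ T.carrier := ⟨y, h⟩
  have h2 : (u, T.hfun u) ∈ T.carrier := by rw [hfun, dif_pos hex]; exact hex.choose_spec
  have := T.carrier_unique h2 h rfl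
  exact (Prod.ext_iff.1 this).2

lemma carrier_eq_graph {p : ℝ × ℝ} (hp : p ∈ T.carrier) : p = (p.1, T.hfun p.1) := by
  have h1 : (p.1, p.2) ∈ T.carrier := by rwa [Prod.mk.eta]
  have : T.hfun p.1 = p.2 := T.hfun_eq h1
  rw [this, Prod.mk.eta]

lemma hfun_vertex {j : ℕ} (hj : j < T.n) : T.hfun (T.xc j) = T.yc j :=
  T.hfun_eq (by rw [xc, yc, Prod.mk.eta]; exact T.vertex_mem_carrier hj)

lemma hfun_affine {i : ℕ} (hi : i + 1 < T.n) {u : ℝ} (h0 : T.xc i ≤ u) (h1 : u ≤ T.xc (i+1)) :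
    T.hfun u = T.yc i + (T.yc (i+1) - T.yc i) / (T.xc (i+1) - T.xc i) * (u - T.xc i) :=
  T.hfun_eq (T.edge_sub_carrier hi (T.point_on_edge hi h0 h1))

/- ## affine helpers -/

lemma aff_between {c d x1 y x2 : ℝ} (h1 : x1 ≤ y) (h2 : y ≤ x2)
    (H1 : 0 ≤ c + d * x1) (H2 : 0 ≤ c + d * x2) : 0 ≤ c + d * y := by
  rcases le_or_gt 0 d with hd | hd
  · nlinarith
  · nlinarith

lemma aff_left {c d b m : ℝ} (hbm : b < m)
    (H : ∀ t, b < t → t ≤ m → 0 ≤ c + d * t) : 0 ≤ c + d * b := by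
  rcases le_or_gt d 0 with hd | hd
  · have := H m hbm le_rfl; nlinarith
  · by_contra hneg
    push_neg at hneg
    set ε := min (m - b) (-(c + d * b) / (2 * d)) with hε
    have hε0 : 0 < ε := lt_min (by linarith) (div_pos (by linarith) (by linarith))
    have h2 : b + ε ≤ m := by have : ε ≤ m - b := min_le_left _ _; linarith
    have h3 := H (b + ε) (by linarith) h2
    have h4 : ε ≤ -(c + d * b) / (2 * d) := min_le_right _ _
    have h5 : d * ε ≤ -(c + d * b) / 2 := by
      have := mul_le_mul_of_nonneg_left h4 hd.le
      have h6 : d * (-(c + d * b) / (2 * d)) = -(c + d * b) / 2 := by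
        field_simp
      linarith [h6 ▸ this]
    nlinarith

lemma aff_right {c d b m : ℝ} (hmb : m < b)
    (H : ∀ t, m ≤ t → t < b → 0 ≤ c + d * t) : 0 ≤ c + d * b := by
  have key := aff_left (c := c) (d := -d) (b := -b) (m := -m) (by linarith) ?_
  · linarith [key]
  · intro s h1 h2
    have := H (-s) (by linarith) (by linarith)
    nlinarith

/- ## the terrain lies below a line if it does so at the vertices -/

lemma h_le_line {c d p q : ℝ} (hp0 : T.xc 0 ≤ p) (hq1 : q ≤ T.xc (T.n - 1))
    (Hp : T.hfun p ≤ c + d * p) (Hq : T.hfun q ≤ c + d * q)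
    (Hv : ∀ j, j < T.n → p ≤ T.xc j → T.xc j ≤ q → T.yc j ≤ c + d * T.xc j) :
    ∀ u, p ≤ u → u ≤ q → T.hfun u ≤ c + d * u := by
  intro u hpu huq
  obtain ⟨i, hi, hl, hr⟩ := T.exists_edge_idx (le_trans hp0 hpu) (le_trans huq hq1)
  set a := max (T.xc i) p with ha
  set b := min (T.xc (i+1)) q with hb
  have hau : a ≤ u := max_le hl hpu
  have hub : u ≤ b := le_min hr huq
  have hxa : T.xc i ≤ a := le_max_left _ _
  have hxb : b ≤ T.xc (i+1) := min_le_left _ _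
  have Ha : T.hfun a ≤ c + d * a := by
    rcases max_cases (T.xc i) p with ⟨h1, h2⟩ | ⟨h1, h2⟩
    · rw [ha, h1, T.hfun_vertex (by omega)]
      exact Hv i (by omega) h2 (by
        calc T.xc i = a := h1.symm
        _ ≤ u := hau
        _ ≤ q := huq)
    · rw [ha, h1]; exact Hp
  have Hb : T.hfun b ≤ c + d * b := by
    rcases min_cases (T.xc (i+1)) q with ⟨h1, h2⟩ | ⟨h1, h2⟩
    · rw [hb, h1, T.hfun_vertex hi]
      exact Hv (i+1) hi (by
        calc p ≤ u := hpu
        _ ≤ b := hub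
        _ = T.xc (i+1) := h1) h2
    · rw [hb, h1]; exact Hq
  set S := (T.yc (i+1) - T.yc i) / (T.xc (i+1) - T.xc i) with hS
  have hrep : ∀ t, T.xc i ≤ t → t ≤ T.xc (i+1) →
      T.hfun t = (T.yc i - S * T.xc i) + S * t := by
    intro t h1 h2
    rw [T.hfun_affine hi h1 h2]; ring
  have goal0 : 0 ≤ (c - (T.yc i - S * T.xc i)) + (d - S) * u := by
    apply aff_between (x1 := a) (x2 := b) hau hub
    · have := hrep a hxa (le_trans hau hub |>.trans hxb)
      rw [this] at Ha; linarith
    · have := hrep b (hxa.trans (hau.trans hub)) hxb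
      rw [this] at Hb; linarith
  have := hrep u (hxa.trans hau) (hub.trans hxb)
  rw [this]; linarith

/- ## seenP : the vertex-based characterization of visibility -/

def seenP (g : ℝ × ℝ) (x : ℝ) : Prop :=
  ∀ k, k < T.n → min g.1 x < T.xc k → T.xc k < max g.1 x →
    (T.yc k - g.2) * |x - g.1| ≤ (T.hfun x - g.2) * |T.xc k - g.1|

lemma sees_iff_seenP {g : ℝ × ℝ} (hg : g ∈ T.carrier) {x : ℝ}
    (hx0 : T.xc 0 ≤ x) (hx1 : x ≤ T.xc (T.n - 1)) :
    T.sees g (x, T.hfun x) ↔ T.seenP g x := by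
  have hgb := T.carrier_x_bounds hg
  have hgfun : T.hfun g.1 = g.2 := T.hfun_eq (by rw [Prod.mk.eta]; exact hg)
  constructor
  · intro hsees k hk h1 h2
    have hne : g.1 ≠ x := by
      intro h
      rw [h, min_self] at h1
      rw [h, max_self] at h2
      linarith
    have hxne : x - g.1 ≠ 0 := fun h => hne (by linarith)
    set τ := (T.xc k - g.1) / (x - g.1) with hτdef
    have hτx : τ * (x - g.1) = T.xc k - g.1 := div_mul_cancel₀ _ hxne
    have hτ01 : 0 ≤ τ ∧ τ ≤ 1 := by
      rcases lt_or_gt_of_ne hne with h | h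
      · rw [min_eq_left h.le] at h1
        rw [max_eq_right h.le] at h2
        constructor
        · exact div_nonneg (by linarith) (by linarith)
        · rw [hτdef, div_le_one (by linarith)]; linarith
      · rw [min_eq_right h.le] at h1
        rw [max_eq_left h.le] at h2
        constructor
        · exact div_nonneg_iff.2 (Or.inr ⟨by linarith, by linarith⟩)
        · rw [hτdef, div_le_one_iff]
          exact Or.inr (Or.inr ⟨by linarith, by linarith⟩)
    have hzseg : (g.1 + τ * (x - g.1), g.2 + τ * (T.hfun x - g.2))
        ∈ segment ℝ g (x, T.hfun x) := by
      rw [segment_eq_image']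
      exact ⟨τ, ⟨hτ01.1, hτ01.2⟩, rfl⟩
    have hyk := hsees _ hzseg (T.v k) (T.vertex_mem_carrier hk)
      (by show T.xc k = g.1 + τ * (x - g.1); linarith [hτx])
    change T.yc k ≤ g.2 + τ * (T.hfun x - g.2) at hyk
    rcases lt_or_gt_of_ne hne with h | h
    · rw [abs_of_pos (by linarith : (0:ℝ) < x - g.1),
        abs_of_pos (by linarith [min_eq_left h.le ▸ h1] : (0:ℝ) < T.xc k - g.1)]
      have hm1 : (T.yc k - g.2) * (x - g.1) ≤ τ * (T.hfun x - g.2) * (x - g.1) :=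
        mul_le_mul_of_nonneg_right (by linarith) (by linarith)
      have hm2 : τ * (T.hfun x - g.2) * (x - g.1) = (T.hfun x - g.2) * (T.xc k - g.1) := by
        linear_combination (T.hfun x - g.2) * hτx
      linarith
    · rw [abs_of_neg (by linarith : x - g.1 < 0),
        abs_of_neg (by linarith [max_eq_left h.le ▸ h2] : T.xc k - g.1 < 0)]
      have hm1 : (T.yc k - g.2) * (g.1 - x) ≤ τ * (T.hfun x - g.2) * (g.1 - x) :=
        mul_le_mul_of_nonneg_right (by linarith) (by linarith)
      have hm2 : τ * (T.hfun x - g.2) * (g.1 - x) = (T.hfun x - g.2) * (g.1 - T.xc k) := by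
        linear_combination (-(T.hfun x) + g.2) * hτx
      nlinarith [hm1, hm2]
  · intro hP z hzseg t ht htx
    rcases eq_or_ne x g.1 with hxe | hxe
    · have hgc : (x, T.hfun x) = g := by
        subst hxe
        exact T.carrier_unique (T.hfun_mem hx0 hx1) hg rfl
      rw [hgc, segment_same, Set.mem_singleton_iff] at hzseg
      subst hzseg
      have : t = z := T.carrier_unique ht (hgc ▸ T.hfun_mem hx0 hx1) htx
      rw [this]
    · have hxne : x - g.1 ≠ 0 := fun h => hxe (by linarith)
      rw [segment_eq_image] at hzseg
      obtain ⟨s, ⟨hs0, hs1⟩, rfl⟩ := hzseg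
      have e1 : ((1 - s) • g + s • (x, T.hfun x)).1 = (1 - s) * g.1 + s * x := rfl
      have e2 : ((1 - s) • g + s • (x, T.hfun x)).2 = (1 - s) * g.2 + s * T.hfun x := rfl
      rw [e1] at htx
      rw [e2]
      set d := (T.hfun x - g.2) / (x - g.1) with hd
      have hdx : d * (x - g.1) = T.hfun x - g.2 := div_mul_cancel₀ _ hxne
      set c := g.2 - d * g.1 with hc
      have Egx : c + d * g.1 = g.2 := by rw [hc]; ring
      have Ex : c + d * x = T.hfun x := by rw [hc]; linarith [hdx]
      have hline : ∀ u, min g.1 x ≤ u → u ≤ max g.1 x → T.hfun u ≤ c + d * u := by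
        apply T.h_le_line
        · exact le_min hgb.1 hx0
        · exact max_le hgb.2 hx1
        · rcases min_cases g.1 x with ⟨h1, _⟩ | ⟨h1, _⟩
          · rw [h1, hgfun, Egx]
          · rw [h1, Ex]
        · rcases max_cases g.1 x with ⟨h1, _⟩ | ⟨h1, _⟩
          · rw [h1, hgfun, Egx]
          · rw [h1, Ex]
        · intro j hj hja hjb
          have hyj : T.yc j = T.hfun (T.xc j) := (T.hfun_vertex hj).symm
          rcases eq_or_lt_of_le hja with he | hlt
          · rw [hyj, ← he]
            rcases min_cases g.1 x with ⟨h1, _⟩ | ⟨h1, _⟩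
            · rw [h1, hgfun, Egx]
            · rw [h1, Ex]
          · rcases eq_or_lt_of_le hjb with he | hlt2
            · rw [hyj, he]
              rcases max_cases g.1 x with ⟨h1, _⟩ | ⟨h1, _⟩
              · rw [h1, hgfun, Egx]
              · rw [h1, Ex]
            · have hPj := hP j hj hlt hlt2
              rcases lt_or_gt_of_ne (Ne.symm hxe) with h | h
              · rw [min_eq_left h.le] at hlt
                rw [abs_of_pos (by linarith : (0:ℝ) < x - g.1),
                  abs_of_pos (by linarith : (0:ℝ) < T.xc j - g.1)] at hPj
                have hm2 : (T.hfun x - g.2) * (T.xc j - g.1)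
                    = d * (T.xc j - g.1) * (x - g.1) := by
                  linear_combination (T.xc j - g.1) * hdx.symm
                have hm3 : (T.yc j - g.2) * (x - g.1) ≤ d * (T.xc j - g.1) * (x - g.1) := by
                  linarith
                have := le_of_mul_le_mul_right (by linarith [hm3] :
                  (T.yc j - g.2) * (x - g.1) ≤ d * (T.xc j - g.1) * (x - g.1))
                  (by linarith : (0:ℝ) < x - g.1)
                linarith
              · rw [max_eq_left h.le] at hlt2
                rw [abs_of_neg (by linarith : x - g.1 < 0),
                  abs_of_neg (by linarith : T.xc j - g.1 < 0)] at hPj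
                have hm2 : (T.hfun x - g.2) * (g.1 - T.xc j)
                    = d * (T.xc j - g.1) * (g.1 - x) := by
                  linear_combination (T.xc j - g.1) * hdx
                have hm3 : (T.yc j - g.2) * (g.1 - x) ≤ d * (T.xc j - g.1) * (g.1 - x) := by
                  linarith [hPj, hm2]
                have := le_of_mul_le_mul_right hm3 (by linarith : (0:ℝ) < g.1 - x)
                linarith
      have hzmin : min g.1 x ≤ (1 - s) * g.1 + s * x := by
        rcases le_total g.1 x with h | h
        · rw [min_eq_left h]; nlinarith
        · rw [min_eq_right h]; nlinarith
      have hzmax : (1 - s) * g.1 + s * x ≤ max g.1 x := by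
        rcases le_total g.1 x with h | h
        · rw [max_eq_right h]; nlinarith
        · rw [max_eq_left h]; nlinarith
      have hfz := hline _ hzmin hzmax
      have ht' : t = ((1 - s) * g.1 + s * x, T.hfun ((1 - s) * g.1 + s * x)) := by
        rw [T.carrier_eq_graph ht, htx]
      have hcz : c + d * ((1 - s) * g.1 + s * x) = (1 - s) * g.2 + s * T.hfun x := by
        rw [hc]; linear_combination s * hdx
      rw [ht']
      show T.hfun ((1 - s) * g.1 + s * x) ≤ _
      linarith

/- ## betweenness of visibility on a single edge -/

lemma no_vertex_between {i k : ℕ} (hi : i + 1 < T.n) (hk : k < T.n) :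
    ¬ (T.xc i < T.xc k ∧ T.xc k < T.xc (i+1)) := by
  rintro ⟨u1, u2⟩
  rcases le_or_gt k i with h | h
  · exact absurd (T.xc_le h (by omega)) (not_le.2 u1)
  · exact absurd (T.xc_le (show i+1 ≤ k by omega) hk) (not_le.2 u2)

lemma between {g : ℝ × ℝ} {i : ℕ} (hi : i + 1 < T.n) {x1 y x2 : ℝ}
    (ha : T.xc i < x1) (h12 : x1 < y) (h23 : y < x2) (hb : x2 < T.xc (i+1))
    (hside : g.1 ≤ x1 ∨ x2 ≤ g.1) (s1 : T.seenP g x1) (s2 : T.seenP g x2) :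
    T.seenP g y := by
  intro k hk hmin hmax
  have hkv := T.no_vertex_between hi hk
  set S := (T.yc (i+1) - T.yc i) / (T.xc (i+1) - T.xc i) with hS
  rcases hside with hs | hs
  · rw [min_eq_left (by linarith)] at hmin
    rw [max_eq_right (by linarith)] at hmax
    have hkx1 : T.xc k < x1 := by
      rcases lt_or_ge (T.xc k) x1 with h | h
      · exact h
      · exact (hkv ⟨lt_of_lt_of_le ha h, by linarith⟩).elim
    have e1 := s1 k hk (by rw [min_eq_left hs]; exact hmin)
      (by rw [max_eq_right hs]; exact hkx1)
    have e2 := s2 k hk (by rw [min_eq_left (by linarith)]; exact hmin)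
      (by rw [max_eq_right (by linarith)]; linarith)
    rw [abs_of_pos (show (0:ℝ) < x1 - g.1 by linarith),
        abs_of_pos (show (0:ℝ) < T.xc k - g.1 by linarith)] at e1
    rw [abs_of_pos (show (0:ℝ) < x2 - g.1 by linarith),
        abs_of_pos (show (0:ℝ) < T.xc k - g.1 by linarith)] at e2
    rw [abs_of_pos (show (0:ℝ) < y - g.1 by linarith),
        abs_of_pos (show (0:ℝ) < T.xc k - g.1 by linarith)]
    have hF : ∀ t, T.xc i ≤ t → t ≤ T.xc (i+1) →
        (T.hfun t - g.2) * (T.xc k - g.1) - (T.yc k - g.2) * (t - g.1) =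
        ((T.yc i - S * T.xc i - g.2) * (T.xc k - g.1) + (T.yc k - g.2) * g.1)
          + (S * (T.xc k - g.1) - (T.yc k - g.2)) * t := by
      intro t u1 u2; rw [T.hfun_affine hi u1 u2]; ring
    have H1 : 0 ≤ ((T.yc i - S * T.xc i - g.2) * (T.xc k - g.1) + (T.yc k - g.2) * g.1)
        + (S * (T.xc k - g.1) - (T.yc k - g.2)) * x1 := by
      rw [← hF x1 (by linarith) (by linarith)]; linarith
    have H2 : 0 ≤ ((T.yc i - S * T.xc i - g.2) * (T.xc k - g.1) + (T.yc k - g.2) * g.1)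
        + (S * (T.xc k - g.1) - (T.yc k - g.2)) * x2 := by
      rw [← hF x2 (by linarith) (by linarith)]; linarith
    have H3 := aff_between (le_of_lt h12) (le_of_lt h23) H1 H2
    rw [← hF y (by linarith) (by linarith)] at H3
    linarith
  · rw [min_eq_right (by linarith)] at hmin
    rw [max_eq_left (by linarith)] at hmax
    have hkx2 : x2 < T.xc k := by
      rcases lt_or_ge x2 (T.xc k) with h | h
      · exact h
      · exact (hkv ⟨by linarith, lt_of_le_of_lt h hb⟩).elim
    have e1 := s1 k hk (by rw [min_eq_right (by linarith)]; linarith)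
      (by rw [max_eq_left (by linarith)]; exact hmax)
    have e2 := s2 k hk (by rw [min_eq_right hs]; exact hkx2)
      (by rw [max_eq_left hs]; exact hmax)
    rw [abs_of_neg (show x1 - g.1 < 0 by linarith),
        abs_of_neg (show T.xc k - g.1 < 0 by linarith)] at e1
    rw [abs_of_neg (show x2 - g.1 < 0 by linarith),
        abs_of_neg (show T.xc k - g.1 < 0 by linarith)] at e2
    rw [abs_of_neg (show y - g.1 < 0 by linarith),
        abs_of_neg (show T.xc k - g.1 < 0 by linarith)]
    have hF : ∀ t, T.xc i ≤ t → t ≤ T.xc (i+1) →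
        (T.hfun t - g.2) * (g.1 - T.xc k) - (T.yc k - g.2) * (g.1 - t) =
        ((T.yc i - S * T.xc i - g.2) * (g.1 - T.xc k) - (T.yc k - g.2) * g.1)
          + (S * (g.1 - T.xc k) + (T.yc k - g.2)) * t := by
      intro t u1 u2; rw [T.hfun_affine hi u1 u2]; ring
    have H1 : 0 ≤ ((T.yc i - S * T.xc i - g.2) * (g.1 - T.xc k) - (T.yc k - g.2) * g.1)
        + (S * (g.1 - T.xc k) + (T.yc k - g.2)) * x1 := by
      rw [← hF x1 (by linarith) (by linarith)]; nlinarith [e1]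
    have H2 : 0 ≤ ((T.yc i - S * T.xc i - g.2) * (g.1 - T.xc k) - (T.yc k - g.2) * g.1)
        + (S * (g.1 - T.xc k) + (T.yc k - g.2)) * x2 := by
      rw [← hF x2 (by linarith) (by linarith)]; nlinarith [e2]
    have H3 := aff_between (le_of_lt h12) (le_of_lt h23) H1 H2
    rw [← hF y (by linarith) (by linarith)] at H3
    nlinarith [H3]

/- ## breakpoints per guard and edge -/

def ER (g : ℝ × ℝ) (i : ℕ) : Set ℝ :=
  {x | max (T.xc i) g.1 < x ∧ x < T.xc (i+1) ∧ T.seenP g x}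

def EL (g : ℝ × ℝ) (i : ℕ) : Set ℝ :=
  {x | T.xc i < x ∧ x < min (T.xc (i+1)) g.1 ∧ T.seenP g x}

open Classical in
noncomputable def brk (g : ℝ × ℝ) (i : ℕ) : Finset ℝ :=
  if g.1 ≤ T.xc i then {sInf (T.ER g i), sSup (T.ER g i)}
  else if T.xc (i+1) ≤ g.1 then {sInf (T.EL g i), sSup (T.EL g i)}
  else {sInf (T.ER g i), sSup (T.ER g i), sInf (T.EL g i), sSup (T.EL g i)}

lemma ER_mem_brk {g : ℝ × ℝ} {i : ℕ} (h : g.1 < T.xc (i+1)) :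
    sInf (T.ER g i) ∈ T.brk g i ∧ sSup (T.ER g i) ∈ T.brk g i := by
  rw [brk]
  split_ifs with h1 h2
  · simp
  · linarith
  · simp

lemma EL_mem_brk {g : ℝ × ℝ} {i : ℕ} (h : T.xc i < g.1) :
    sInf (T.EL g i) ∈ T.brk g i ∧ sSup (T.EL g i) ∈ T.brk g i := by
  rw [brk]
  split_ifs with h1 h2
  · linarith
  · simp
  · simp

lemma card_pair_le (a b : ℝ) : ({a, b} : Finset ℝ).card ≤ 2 :=
  le_trans (Finset.card_insert_le _ _) (by simp)

lemma card_quad_le (a b c d : ℝ) : ({a, b, c, d} : Finset ℝ).card ≤ 4 := by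
  have h1 := Finset.card_insert_le a ({b, c, d} : Finset ℝ)
  have h2 := Finset.card_insert_le b ({c, d} : Finset ℝ)
  have h3 := card_pair_le c d
  omega

lemma brk_card4 (g : ℝ × ℝ) (i : ℕ) : (T.brk g i).card ≤ 4 := by
  rw [brk]
  split_ifs
  · exact le_trans (card_pair_le _ _) (by norm_num)
  · exact le_trans (card_pair_le _ _) (by norm_num)
  · exact card_quad_le _ _ _ _

lemma brk_card2 {g : ℝ × ℝ} {i : ℕ} (h : ¬ (T.xc i < g.1 ∧ g.1 < T.xc (i+1))) :
    (T.brk g i).card ≤ 2 := by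
  rw [brk]
  split_ifs with h1 h2
  · exact card_pair_le _ _
  · exact card_pair_le _ _
  · exact absurd ⟨not_le.1 h1, not_le.1 h2⟩ h

/- ## the cell lemma : visibility is constant on breakpoint-free cells -/

lemma cell_seen {g : ℝ × ℝ} {i : ℕ} (hi : i + 1 < T.n)
    {b b' m : ℝ} (hbm : b < m) (hmb' : m < b')
    (hxi : T.xc i ≤ b) (hxb' : b' ≤ T.xc (i+1))
    (hbrk : ∀ x ∈ T.brk g i, x ∉ Ioo b b')
    (hgx : g.1 ∉ Ioo b b')
    (hm : T.seenP g m) :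
    ∀ y, b ≤ y → y ≤ b' → T.seenP g y := by
  have hside : g.1 ≤ b ∨ b' ≤ g.1 := by
    by_contra hcon; push_neg at hcon; exact hgx ⟨hcon.1, hcon.2⟩
  set S := (T.yc (i+1) - T.yc i) / (T.xc (i+1) - T.xc i) with hS
  rcases hside with hgb | hgb
  · -- cell to the right of the guard
    have hmE : m ∈ T.ER g i :=
      ⟨lt_of_le_of_lt (max_le hxi hgb) hbm, lt_of_lt_of_le hmb' hxb', hm⟩
    have hne : (T.ER g i).Nonempty := ⟨m, hmE⟩
    have hbdd : BddBelow (T.ER g i) := ⟨max (T.xc i) g.1, fun x hx => hx.1.le⟩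
    have hbda : BddAbove (T.ER g i) := ⟨T.xc (i+1), fun x hx => hx.2.1.le⟩
    have hmem := T.ER_mem_brk (g := g) (i := i) (by linarith : g.1 < T.xc (i+1))
    have hIle : sInf (T.ER g i) ≤ b := by
      by_contra hcon; push_neg at hcon
      exact hbrk _ hmem.1 ⟨hcon, lt_of_le_of_lt (csInf_le hbdd hmE) hmb'⟩
    have hSge : b' ≤ sSup (T.ER g i) := by
      by_contra hcon; push_neg at hcon
      exact hbrk _ hmem.2 ⟨lt_of_lt_of_le hbm (le_csSup hbda hmE), hcon⟩
    have hint : ∀ y, b < y → y < b' → T.seenP g y := by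
      intro y hy1 hy2
      obtain ⟨x1, hx1E, hx1⟩ := (csInf_lt_iff hbdd hne).1 (lt_of_le_of_lt hIle hy1)
      obtain ⟨x2, hx2E, hx2⟩ := (lt_csSup_iff hbda hne).1 (lt_of_lt_of_le hy2 hSge)
      exact T.between hi (lt_of_le_of_lt (le_max_left _ _) hx1E.1) hx1 hx2 hx2E.2.1
        (Or.inl (le_of_lt (lt_of_le_of_lt (le_max_right _ _) hx1E.1))) hx1E.2.2 hx2E.2.2
    intro y hy1 hy2
    rcases eq_or_lt_of_le hy1 with hyb | hy1'
    · -- y = b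
      subst hyb
      intro k hk hminc hmaxc
      rw [min_eq_left hgb] at hminc
      rw [max_eq_right hgb] at hmaxc
      rw [abs_of_nonneg (by linarith : (0:ℝ) ≤ b - g.1),
          abs_of_pos (by linarith : (0:ℝ) < T.xc k - g.1)]
      have hF : ∀ t, T.xc i ≤ t → t ≤ T.xc (i+1) →
          (T.hfun t - g.2) * (T.xc k - g.1) - (T.yc k - g.2) * (t - g.1) =
          ((T.yc i - S * T.xc i - g.2) * (T.xc k - g.1) + (T.yc k - g.2) * g.1)
            + (S * (T.xc k - g.1) - (T.yc k - g.2)) * t := by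
        intro t u1 u2; rw [T.hfun_affine hi u1 u2]; ring
      have key : ∀ t, b < t → t ≤ (b + b') / 2 →
          0 ≤ ((T.yc i - S * T.xc i - g.2) * (T.xc k - g.1) + (T.yc k - g.2) * g.1)
            + (S * (T.xc k - g.1) - (T.yc k - g.2)) * t := by
        intro t u1 u2
        have hst := hint t u1 (by linarith)
        have hin := hst k hk (by rw [min_eq_left (by linarith)]; linarith)
          (by rw [max_eq_right (by linarith)]; linarith)
        rw [abs_of_pos (by linarith : (0:ℝ) < t - g.1),
            abs_of_pos (by linarith : (0:ℝ) < T.xc k - g.1)] at hin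
        rw [← hF t (by linarith) (by linarith)]
        linarith
      have hres := aff_left (by linarith : b < (b + b') / 2) key
      rw [← hF b (by linarith) (by linarith)] at hres
      linarith
    · rcases eq_or_lt_of_le hy2 with hyb | hy2'
      · -- y = b'
        subst hyb
        intro k hk hminc hmaxc
        rw [min_eq_left (by linarith)] at hminc
        rw [max_eq_right (by linarith)] at hmaxc
        have hkb : T.xc k ≤ b := by
          rcases le_or_gt (T.xc k) b with h | h
          · exact h
          · exact ((T.no_vertex_between hi hk) ⟨lt_of_le_of_lt hxi h, lt_of_lt_of_le hmaxc hxb'⟩).elim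
        rw [abs_of_pos (by linarith : (0:ℝ) < y - g.1),
            abs_of_pos (by linarith : (0:ℝ) < T.xc k - g.1)]
        have hF : ∀ t, T.xc i ≤ t → t ≤ T.xc (i+1) →
            (T.hfun t - g.2) * (T.xc k - g.1) - (T.yc k - g.2) * (t - g.1) =
            ((T.yc i - S * T.xc i - g.2) * (T.xc k - g.1) + (T.yc k - g.2) * g.1)
              + (S * (T.xc k - g.1) - (T.yc k - g.2)) * t := by
          intro t u1 u2; rw [T.hfun_affine hi u1 u2]; ring
        have key : ∀ t, (b + y) / 2 ≤ t → t < y →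
            0 ≤ ((T.yc i - S * T.xc i - g.2) * (T.xc k - g.1) + (T.yc k - g.2) * g.1)
              + (S * (T.xc k - g.1) - (T.yc k - g.2)) * t := by
          intro t u1 u2
          have hst := hint t (by linarith) u2
          have hin := hst k hk (by rw [min_eq_left (by linarith)]; linarith)
            (by rw [max_eq_right (by linarith)]; linarith)
          rw [abs_of_pos (by linarith : (0:ℝ) < t - g.1),
              abs_of_pos (by linarith : (0:ℝ) < T.xc k - g.1)] at hin
          rw [← hF t (by linarith) (by linarith)]
          linarith
        have hres := aff_right (by linarith : (b + y) / 2 < y) key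
        rw [← hF y (by linarith) (by linarith)] at hres
        linarith
      · exact hint y hy1' hy2'
  · -- cell to the left of the guard
    have hmE : m ∈ T.EL g i :=
      ⟨lt_of_le_of_lt hxi hbm, lt_of_lt_of_le hmb' (le_min hxb' hgb), hm⟩
    have hne : (T.EL g i).Nonempty := ⟨m, hmE⟩
    have hbdd : BddBelow (T.EL g i) := ⟨T.xc i, fun x hx => hx.1.le⟩
    have hbda : BddAbove (T.EL g i) := ⟨min (T.xc (i+1)) g.1, fun x hx => hx.2.1.le⟩
    have hmem := T.EL_mem_brk (g := g) (i := i) (by linarith : T.xc i < g.1)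
    have hIle : sInf (T.EL g i) ≤ b := by
      by_contra hcon; push_neg at hcon
      exact hbrk _ hmem.1 ⟨hcon, lt_of_le_of_lt (csInf_le hbdd hmE) hmb'⟩
    have hSge : b' ≤ sSup (T.EL g i) := by
      by_contra hcon; push_neg at hcon
      exact hbrk _ hmem.2 ⟨lt_of_lt_of_le hbm (le_csSup hbda hmE), hcon⟩
    have hint : ∀ y, b < y → y < b' → T.seenP g y := by
      intro y hy1 hy2
      obtain ⟨x1, hx1E, hx1⟩ := (csInf_lt_iff hbdd hne).1 (lt_of_le_of_lt hIle hy1)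
      obtain ⟨x2, hx2E, hx2⟩ := (lt_csSup_iff hbda hne).1 (lt_of_lt_of_le hy2 hSge)
      exact T.between hi hx1E.1 hx1 hx2 (lt_of_lt_of_le hx2E.2.1 (min_le_left _ _))
        (Or.inr (le_of_lt (lt_of_lt_of_le hx2E.2.1 (min_le_right _ _)))) hx1E.2.2 hx2E.2.2
    intro y hy1 hy2
    rcases eq_or_lt_of_le hy1 with hyb | hy1'
    · -- y = b
      subst hyb
      intro k hk hminc hmaxc
      rw [min_eq_right (by linarith)] at hminc
      rw [max_eq_left (by linarith)] at hmaxc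
      have hkb : b' ≤ T.xc k := by
        rcases le_or_gt b' (T.xc k) with h | h
        · exact h
        · exact ((T.no_vertex_between hi hk) ⟨lt_of_le_of_lt hxi hminc, lt_of_lt_of_le h hxb'⟩).elim
      rw [abs_of_neg (by linarith : b - g.1 < 0),
          abs_of_neg (by linarith : T.xc k - g.1 < 0)]
      have hF : ∀ t, T.xc i ≤ t → t ≤ T.xc (i+1) →
          (T.hfun t - g.2) * (g.1 - T.xc k) - (T.yc k - g.2) * (g.1 - t) =
          ((T.yc i - S * T.xc i - g.2) * (g.1 - T.xc k) - (T.yc k - g.2) * g.1)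
            + (S * (g.1 - T.xc k) + (T.yc k - g.2)) * t := by
        intro t u1 u2; rw [T.hfun_affine hi u1 u2]; ring
      have key : ∀ t, b < t → t ≤ (b + b') / 2 →
          0 ≤ ((T.yc i - S * T.xc i - g.2) * (g.1 - T.xc k) - (T.yc k - g.2) * g.1)
            + (S * (g.1 - T.xc k) + (T.yc k - g.2)) * t := by
        intro t u1 u2
        have hst := hint t u1 (by linarith)
        have hin := hst k hk (by rw [min_eq_right (by linarith)]; linarith)
          (by rw [max_eq_left (by linarith)]; linarith)
        rw [abs_of_neg (by linarith : t - g.1 < 0),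
            abs_of_neg (by linarith : T.xc k - g.1 < 0)] at hin
        rw [← hF t (by linarith) (by linarith)]
        linarith
      have hres := aff_left (by linarith : b < (b + b') / 2) key
      rw [← hF b (by linarith) (by linarith)] at hres
      linarith
    · rcases eq_or_lt_of_le hy2 with hyb | hy2'
      · -- y = b'
        subst hyb
        intro k hk hminc hmaxc
        rw [min_eq_right (by linarith)] at hminc
        rw [max_eq_left (by linarith)] at hmaxc
        rw [abs_of_neg (by linarith : y - g.1 < 0),
            abs_of_neg (by linarith : T.xc k - g.1 < 0)]
        have hF : ∀ t, T.xc i ≤ t → t ≤ T.xc (i+1) →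
            (T.hfun t - g.2) * (g.1 - T.xc k) - (T.yc k - g.2) * (g.1 - t) =
            ((T.yc i - S * T.xc i - g.2) * (g.1 - T.xc k) - (T.yc k - g.2) * g.1)
              + (S * (g.1 - T.xc k) + (T.yc k - g.2)) * t := by
          intro t u1 u2; rw [T.hfun_affine hi u1 u2]; ring
        have key : ∀ t, (b + y) / 2 ≤ t → t < y →
            0 ≤ ((T.yc i - S * T.xc i - g.2) * (g.1 - T.xc k) - (T.yc k - g.2) * g.1)
              + (S * (g.1 - T.xc k) + (T.yc k - g.2)) * t := by
          intro t u1 u2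
          have hst := hint t (by linarith) u2
          have hin := hst k hk (by rw [min_eq_right (by linarith)]; linarith)
            (by rw [max_eq_left (by linarith)]; linarith)
          rw [abs_of_neg (by linarith : t - g.1 < 0),
              abs_of_neg (by linarith : T.xc k - g.1 < 0)] at hin
          rw [← hF t (by linarith) (by linarith)]
          linarith
        have hres := aff_right (by linarith : (b + y) / 2 < y) key
        rw [← hF y (by linarith) (by linarith)] at hres
        linarith
      · exact hint y hy1' hy2'

end Terrain

/-- For any finite guard candidate set `G` with `V(G) = T` there is a
witness set `W` of size at most `4·n·|G| + 1` such that (i) every point of `T` has a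
witness in `W` whose set of seeing guards is a subset of its own, (ii) any `C ⊆ G`
covering `W` covers `T`, and (iii) `OPT(G, W) = OPT(G, T)`. -/
theorem witness_discretization (T : Terrain) (G : Finset (ℝ × ℝ))
    (hG : ↑G ⊆ T.carrier) (hGcov : T.visSet ↑G = T.carrier) :
    ∃ W : Finset (ℝ × ℝ), ↑W ⊆ T.carrier ∧ W.card ≤ 4 * T.n * G.card + 1 ∧
      (∀ w ∈ T.carrier, ∃ w' ∈ W,
        {g : ℝ × ℝ | g ∈ G ∧ T.sees g w'} ⊆ {g : ℝ × ℝ | g ∈ G ∧ T.sees g w}) ∧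
      (∀ C : Finset (ℝ × ℝ), C ⊆ G → ↑W ⊆ T.visSet ↑C → T.visSet ↑C = T.carrier) ∧
      T.OPT ↑G ↑W = T.OPT ↑G T.carrier := by
  classical
  have hn2 := T.hn
  -- G is nonempty
  have hGne : 0 < G.card := by
    rcases Finset.eq_empty_or_nonempty G with rfl | h
    · exfalso
      have hv0 : T.v 0 ∈ T.carrier := T.vertex_mem_carrier (by omega)
      rw [← hGcov] at hv0
      simp [Terrain.visSet] at hv0
    · exact Finset.card_pos.2 h
  have hαβ : T.xc 0 < T.xc (T.n - 1) := T.xc_lt (by omega) (by omega)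
  -- the clamp function
  set cl : ℝ → ℝ := fun x => max (T.xc 0) (min x (T.xc (T.n - 1))) with hcldef
  have hcl_mem : ∀ x, T.xc 0 ≤ cl x ∧ cl x ≤ T.xc (T.n - 1) := by
    intro x
    refine ⟨le_max_left _ _, max_le hαβ.le (min_le_right _ _)⟩
  have hcl_id : ∀ x, T.xc 0 ≤ x → x ≤ T.xc (T.n - 1) → cl x = x := by
    intro x h1 h2
    rw [hcldef]
    simp only
    rw [min_eq_left h2, max_eq_right h1]
  -- the breakpoint set
  set rawB : Finset ℝ := (Finset.range T.n).image T.xc ∪ G.image Prod.fst ∪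
      G.biUnion (fun g => (Finset.range (T.n - 1)).biUnion (fun i => T.brk g i)) with hrawdef
  set B : Finset ℝ := rawB.image cl with hBdef
  have hBdom : ∀ b ∈ B, T.xc 0 ≤ b ∧ b ≤ T.xc (T.n - 1) := by
    intro b hb
    obtain ⟨x, _, rfl⟩ := Finset.mem_image.1 hb
    exact hcl_mem x
  have hvertB : ∀ j, j < T.n → T.xc j ∈ B := by
    intro j hj
    have hraw : T.xc j ∈ rawB := by
      rw [hrawdef]
      exact Finset.mem_union_left _ (Finset.mem_union_left _
        (Finset.mem_image_of_mem _ (Finset.mem_range.2 hj)))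
    have hb1 : T.xc 0 ≤ T.xc j := T.xc_le (by omega) hj
    have hb2 : T.xc j ≤ T.xc (T.n - 1) := T.xc_le (by omega) (by omega)
    exact Finset.mem_image.2 ⟨T.xc j, hraw, hcl_id _ hb1 hb2⟩
  have hαB : T.xc 0 ∈ B := hvertB 0 (by omega)
  have hβB : T.xc (T.n - 1) ∈ B := hvertB (T.n - 1) (by omega)
  have hgxB : ∀ g ∈ G, g.1 ∈ B := by
    intro g hg
    have hraw : g.1 ∈ rawB := by
      rw [hrawdef]
      exact Finset.mem_union_left _ (Finset.mem_union_right _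
        (Finset.mem_image_of_mem _ hg))
    have hb := T.carrier_x_bounds (hG hg)
    exact Finset.mem_image.2 ⟨g.1, hraw, hcl_id _ hb.1 hb.2⟩
  have hbrkB : ∀ g ∈ G, ∀ i, i + 1 < T.n → ∀ x ∈ T.brk g i,
      T.xc 0 ≤ x → x ≤ T.xc (T.n - 1) → x ∈ B := by
    intro g hg i hi x hx h1 h2
    have hraw : x ∈ rawB := by
      rw [hrawdef]
      refine Finset.mem_union_right _ (Finset.mem_biUnion.2 ⟨g, hg, ?_⟩)
      exact Finset.mem_biUnion.2 ⟨i, Finset.mem_range.2 (by omega), hx⟩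
    exact Finset.mem_image.2 ⟨x, hraw, hcl_id _ h1 h2⟩
  -- cardinality of B
  have hinner : ∀ g : ℝ × ℝ,
      (∑ i ∈ Finset.range (T.n - 1), (T.brk g i).card) ≤ 2 * (T.n - 1) + 2 := by
    intro g
    have hbound : ∀ i ∈ Finset.range (T.n - 1), (T.brk g i).card ≤
        2 + (if T.xc i < g.1 ∧ g.1 < T.xc (i+1) then 2 else 0) := by
      intro i _
      by_cases h : T.xc i < g.1 ∧ g.1 < T.xc (i+1)
      · rw [if_pos h]; exact T.brk_card4 g i
      · rw [if_neg h]; simpa using T.brk_card2 h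
    have hfil : ((Finset.range (T.n - 1)).filter
        (fun i => T.xc i < g.1 ∧ g.1 < T.xc (i+1))).card ≤ 1 := by
      apply Finset.card_le_one.2
      intro a ha b hb
      simp only [Finset.mem_filter, Finset.mem_range] at ha hb
      by_contra hne
      rcases Nat.lt_or_ge a b with h | h
      · have : T.xc (a+1) ≤ T.xc b := T.xc_le (by omega) (by omega)
        linarith [ha.2.2, hb.2.1]
      · have hba : b < a := by omega
        have : T.xc (b+1) ≤ T.xc a := T.xc_le (by omega) (by omega)
        linarith [hb.2.2, ha.2.1]
    have hsum2 : (∑ i ∈ Finset.range (T.n - 1),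
        (if T.xc i < g.1 ∧ g.1 < T.xc (i+1) then 2 else 0)) ≤ 2 := by
      rw [← Finset.sum_filter]
      rw [Finset.sum_const, smul_eq_mul]
      omega
    calc (∑ i ∈ Finset.range (T.n - 1), (T.brk g i).card)
        ≤ ∑ i ∈ Finset.range (T.n - 1),
          (2 + (if T.xc i < g.1 ∧ g.1 < T.xc (i+1) then 2 else 0)) :=
          Finset.sum_le_sum hbound
      _ ≤ 2 * (T.n - 1) + 2 := by
          rw [Finset.sum_add_distrib, Finset.sum_const, Finset.card_range, smul_eq_mul]
          omega
  have hBcard : B.card ≤ T.n + G.card + G.card * (2 * (T.n - 1) + 2) := by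
    have h1 : B.card ≤ rawB.card := Finset.card_image_le
    have h2 : rawB.card ≤ ((Finset.range T.n).image T.xc).card + (G.image Prod.fst).card +
        (G.biUnion (fun g => (Finset.range (T.n - 1)).biUnion (fun i => T.brk g i))).card := by
      rw [hrawdef]
      exact le_trans (Finset.card_union_le _ _)
        (Nat.add_le_add_right (Finset.card_union_le _ _) _)
    have h3 : ((Finset.range T.n).image T.xc).card ≤ T.n :=
      le_trans Finset.card_image_le (by simp)
    have h4 : (G.image Prod.fst).card ≤ G.card := Finset.card_image_le
    have h5 : (G.biUnion (fun g => (Finset.range (T.n - 1)).biUnion (fun i => T.brk g i))).card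
        ≤ G.card * (2 * (T.n - 1) + 2) := by
      refine le_trans Finset.card_biUnion_le ?_
      refine le_trans (Finset.sum_le_sum (fun g _ =>
        le_trans Finset.card_biUnion_le (hinner g))) ?_
      rw [Finset.sum_const, smul_eq_mul]
    omega
  -- the successor function on B
  set nxt : ℝ → ℝ := fun b => sInf {c | c ∈ B ∧ b < c} with hnxtdef
  have hfin : ∀ b : ℝ, {c | c ∈ B ∧ b < c}.Finite := by
    intro b
    exact B.finite_toSet.subset (fun x hx => hx.1)
  have hnxt : ∀ b ∈ B, b < T.xc (T.n - 1) →
      nxt b ∈ B ∧ b < nxt b ∧ ∀ c ∈ B, b < c → nxt b ≤ c := by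
    intro b hb hbβ
    have hne : {c | c ∈ B ∧ b < c}.Nonempty := ⟨T.xc (T.n - 1), hβB, hbβ⟩
    have hmem := hne.csInf_mem (hfin b)
    exact ⟨hmem.1, hmem.2, fun c hc hbc => csInf_le (hfin b).bddBelow ⟨hc, hbc⟩⟩
  -- the witness points
  set wpt : ℝ → ℝ × ℝ :=
    fun b => ((b + nxt b) / 2, T.hfun ((b + nxt b) / 2)) with hwptdef
  set W : Finset (ℝ × ℝ) :=
    (B.filter (fun b => b < T.xc (T.n - 1))).image wpt with hWdef
  -- key property of witnesses
  have hkey : ∀ b ∈ B, b < T.xc (T.n - 1) → ∀ g ∈ G, T.sees g (wpt b) →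
      ∀ y, b ≤ y → y ≤ nxt b → T.sees g (y, T.hfun y) := by
    intro b hb hbβ g hgG hsee y hy1 hy2
    obtain ⟨hnB, hbn, hnle⟩ := hnxt b hb hbβ
    have hαb : T.xc 0 ≤ b := (hBdom b hb).1
    have hnβ : nxt b ≤ T.xc (T.n - 1) := (hBdom _ hnB).2
    have hmid1 : b < (b + nxt b) / 2 := by linarith
    have hmid2 : (b + nxt b) / 2 < nxt b := by linarith
    obtain ⟨i, hi, hl, hr⟩ := T.exists_edge_idx (u := (b + nxt b) / 2)
      (by linarith) (by linarith)
    have hib : T.xc i ≤ b := by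
      rcases le_or_gt (T.xc i) b with h | h
      · exact h
      · exfalso
        have := hnle _ (hvertB i (by omega)) h
        linarith
    have hnr : nxt b ≤ T.xc (i+1) := by
      rcases le_or_gt (nxt b) (T.xc (i+1)) with h | h
      · exact h
      · exfalso
        have := hnle _ (hvertB (i+1) (by omega)) (by linarith)
        linarith
    have hgc : g ∈ T.carrier := hG hgG
    have hsee' : T.sees g ((b + nxt b) / 2, T.hfun ((b + nxt b) / 2)) := by
      simp only [hwptdef] at hsee; exact hsee
    have hsP : T.seenP g ((b + nxt b) / 2) :=
      (T.sees_iff_seenP hgc (by linarith) (by linarith)).1 hsee'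
    have hbrkio : ∀ x ∈ T.brk g i, x ∉ Ioo b (nxt b) := by
      intro x hx hio
      have hxB : x ∈ B := hbrkB g hgG i hi x hx (by linarith [hio.1]) (by linarith [hio.2])
      exact absurd (hnle x hxB hio.1) (not_le.2 hio.2)
    have hgio : g.1 ∉ Ioo b (nxt b) := by
      intro hio
      exact absurd (hnle g.1 (hgxB g hgG) hio.1) (not_le.2 hio.2)
    have hyP := T.cell_seen hi hmid1 hmid2 hib hnr hbrkio hgio hsP y hy1 hy2
    exact (T.sees_iff_seenP hgc (by linarith) (by linarith)).2 hyP
  -- witness selection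
  have hwit : ∀ x, T.xc 0 ≤ x → x ≤ T.xc (T.n - 1) →
      ∃ b ∈ B, b < T.xc (T.n - 1) ∧ b ≤ x ∧ x ≤ nxt b := by
    intro x h1 h2
    set Sx := B.filter (fun c => c ≤ x ∧ c < T.xc (T.n - 1)) with hSxdef
    have hSne : Sx.Nonempty := ⟨T.xc 0, Finset.mem_filter.2 ⟨hαB, h1, hαβ⟩⟩
    have hbS := Finset.mem_filter.1 (Sx.max'_mem hSne)
    refine ⟨Sx.max' hSne, hbS.1, hbS.2.2, hbS.2.1, ?_⟩
    by_contra hcon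
    push_neg at hcon
    obtain ⟨hnB, hbn, hnle⟩ := hnxt _ hbS.1 hbS.2.2
    have hmem : nxt (Sx.max' hSne) ∈ Sx :=
      Finset.mem_filter.2 ⟨hnB, hcon.le, lt_of_lt_of_le hcon h2⟩
    have := Sx.le_max' _ hmem
    linarith
  -- the subset property (i)
  have hWcar : ↑W ⊆ T.carrier := by
    intro p hp
    rw [hWdef] at hp
    obtain ⟨b, hbf, rfl⟩ := Finset.mem_image.1 (Finset.mem_coe.1 hp)
    rw [Finset.mem_filter] at hbf
    obtain ⟨hnB, hbn, _⟩ := hnxt b hbf.1 hbf.2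
    have hαb : T.xc 0 ≤ b := (hBdom b hbf.1).1
    have hnβ : nxt b ≤ T.xc (T.n - 1) := (hBdom _ hnB).2
    simp only [hwptdef]
    exact T.hfun_mem (by linarith) (by linarith)
  have hprop1 : ∀ w ∈ T.carrier, ∃ w' ∈ W,
      {g : ℝ × ℝ | g ∈ G ∧ T.sees g w'} ⊆ {g : ℝ × ℝ | g ∈ G ∧ T.sees g w} := by
    intro w hw
    have hwb := T.carrier_x_bounds hw
    obtain ⟨b, hbB, hbβ, hbx, hxn⟩ := hwit w.1 hwb.1 hwb.2
    refine ⟨wpt b, by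
      rw [hWdef]
      exact Finset.mem_image_of_mem _ (Finset.mem_filter.2 ⟨hbB, hbβ⟩), ?_⟩
    rintro g ⟨hgG, hgsee⟩
    refine ⟨hgG, ?_⟩
    have := hkey b hbB hbβ g hgG hgsee w.1 hbx hxn
    rwa [← T.carrier_eq_graph hw] at this
  -- property (ii)
  have hprop2 : ∀ C : Finset (ℝ × ℝ), C ⊆ G → ↑W ⊆ T.visSet ↑C →
      T.visSet ↑C = T.carrier := by
    intro C hCG hWC
    apply Set.Subset.antisymm
    · intro p hp
      rw [Terrain.visSet] at hp
      obtain ⟨g, -, hgvis⟩ := Set.mem_iUnion₂.1 hp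
      exact hgvis.1
    · intro w hw
      obtain ⟨w', hw'W, hsub⟩ := hprop1 w hw
      have hw'vis : w' ∈ T.visSet ↑C := hWC (Finset.mem_coe.2 hw'W)
      rw [Terrain.visSet] at hw'vis
      obtain ⟨g, hgC, hgvis⟩ := Set.mem_iUnion₂.1 hw'vis
      have hgC' : g ∈ C := Finset.mem_coe.1 hgC
      have hgmem : g ∈ {g : ℝ × ℝ | g ∈ G ∧ T.sees g w'} := ⟨hCG hgC', hgvis.2⟩
      have hgw := hsub hgmem
      rw [Terrain.visSet]
      exact Set.mem_iUnion₂.2 ⟨g, hgC, hw, hgw.2⟩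
  refine ⟨W, hWcar, ?_, hprop1, hprop2, ?_⟩
  · -- cardinality
    have h1 : W.card ≤ (B.filter (fun b => b < T.xc (T.n - 1))).card := by
      rw [hWdef]; exact Finset.card_image_le
    have h2 : (B.filter (fun b => b < T.xc (T.n - 1))).card + 1 ≤ B.card := by
      have hsub : B.filter (fun b => b < T.xc (T.n - 1)) ⊆ B.erase (T.xc (T.n - 1)) := by
        intro b hb
        rw [Finset.mem_filter] at hb
        exact Finset.mem_erase.2 ⟨ne_of_lt hb.2, hb.1⟩
      have := Finset.card_le_card hsub
      rw [Finset.card_erase_of_mem hβB] at this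
      have hpos : 0 < B.card := Finset.card_pos.2 ⟨_, hβB⟩
      omega
    have h3 : T.n ≤ T.n * G.card := Nat.le_mul_of_pos_right _ hGne
    have h4 : G.card ≤ T.n * G.card := Nat.le_mul_of_pos_left _ (by omega)
    have h5 : G.card * (2 * (T.n - 1) + 2) = 2 * (T.n * G.card) := by
      have : 2 * (T.n - 1) + 2 = 2 * T.n := by omega
      rw [this]; ring
    rw [h5] at hBcard
    have h6 : 4 * T.n * G.card = 4 * (T.n * G.card) := by ring
    omega
  · -- OPT equality
    rw [Terrain.OPT, Terrain.OPT]
    congr 1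
    ext k
    constructor
    · rintro ⟨C, h1, h2, h3⟩
      have hCG : C ⊆ G := by
        intro x hx
        exact Finset.mem_coe.1 (h1 (Finset.mem_coe.2 hx))
      exact ⟨C, h1, by rw [hprop2 C hCG h2], h3⟩
    · rintro ⟨C, h1, h2, h3⟩
      exact ⟨C, h1, subset_trans hWcar h2, h3⟩
end

section
/- Let T be a terrain and p ∈ T. Then the visibility region V(p) = {q ∈ T : p sees q} is a closed subset of ℝ². -/
open Set

section Aux

open Filter

variable (T : Terrain)

lemma aux_mem_carrier_iff (t : ℝ × ℝ) :
    t ∈ T.carrier ↔ ∃ i, i < T.n - 1 ∧ t ∈ T.edge i := by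
  simp [Terrain.carrier]

lemma aux_carrier_compact : IsCompact T.carrier := by
  apply Set.Finite.isCompact_biUnion (Finset.range (T.n - 1)).finite_toSet
  intro i _
  rw [Terrain.edge, ← convexHull_pair]
  exact (Set.toFinite _).isCompact_convexHull (𝕜 := ℝ)

lemma aux_seg_fst {u w t : ℝ × ℝ} (h : t ∈ segment ℝ u w) :
    t.1 ∈ segment ℝ u.1 w.1 := by
  obtain ⟨a, b, ha, hb, hab, rfl⟩ := h
  exact ⟨a, b, ha, hb, hab, by simp⟩

lemma aux_edge_x {i : ℕ} (hi : i + 1 < T.n) {t : ℝ × ℝ} (ht : t ∈ T.edge i) :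
    (T.v i).1 ≤ t.1 ∧ t.1 ≤ (T.v (i + 1)).1 := by
  have hlt : (T.v i).1 < (T.v (i + 1)).1 := T.mono i (i + 1) (Nat.lt_succ_self i) hi
  have h := aux_seg_fst ht
  rw [segment_eq_Icc hlt.le] at h
  exact ⟨h.1, h.2⟩

lemma aux_edge_left {i : ℕ} (hi : i + 1 < T.n) {t : ℝ × ℝ} (ht : t ∈ T.edge i)
    (hx : t.1 = (T.v i).1) : t = T.v i := by
  obtain ⟨a, b, ha, hb, hab, rfl⟩ := ht
  have hlt : (T.v i).1 < (T.v (i + 1)).1 := T.mono i (i + 1) (Nat.lt_succ_self i) hi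
  simp only [Prod.fst_add, Prod.smul_fst, smul_eq_mul] at hx
  have hz : b * ((T.v (i + 1)).1 - (T.v i).1) = 0 := by
    linear_combination hx - (T.v i).1 * hab
  rcases mul_eq_zero.1 hz with h | h
  · have ha1 : a = 1 := by linarith
    simp [h, ha1]
  · exact absurd (by linarith : (T.v i).1 = (T.v (i + 1)).1) hlt.ne

lemma aux_edge_right {i : ℕ} (hi : i + 1 < T.n) {t : ℝ × ℝ} (ht : t ∈ T.edge i)
    (hx : t.1 = (T.v (i + 1)).1) : t = T.v (i + 1) := by
  obtain ⟨a, b, ha, hb, hab, rfl⟩ := ht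
  have hlt : (T.v i).1 < (T.v (i + 1)).1 := T.mono i (i + 1) (Nat.lt_succ_self i) hi
  simp only [Prod.fst_add, Prod.smul_fst, smul_eq_mul] at hx
  have hz : a * ((T.v (i + 1)).1 - (T.v i).1) = 0 := by
    linear_combination (T.v (i + 1)).1 * hab - hx
  rcases mul_eq_zero.1 hz with h | h
  · have hb1 : b = 1 := by linarith
    simp [h, hb1]
  · exact absurd (by linarith : (T.v i).1 = (T.v (i + 1)).1) hlt.ne

lemma aux_carrier_x_range {t : ℝ × ℝ} (ht : t ∈ T.carrier) :
    (T.v 0).1 ≤ t.1 ∧ t.1 ≤ (T.v (T.n - 1)).1 := by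
  obtain ⟨i, hi, hti⟩ := (aux_mem_carrier_iff T t).1 ht
  have hn := T.hn
  have hi1 : i + 1 < T.n := by omega
  obtain ⟨h1, h2⟩ := aux_edge_x T hi1 hti
  constructor
  · refine le_trans ?_ h1
    rcases Nat.eq_zero_or_pos i with h | h
    · subst h; exact le_refl _
    · exact le_of_lt (T.mono 0 i h (by omega))
  · refine le_trans h2 ?_
    rcases eq_or_lt_of_le (show i + 1 ≤ T.n - 1 by omega) with h | h
    · rw [h]
    · exact le_of_lt (T.mono (i + 1) (T.n - 1) h (by omega))

/-- Functionality: the terrain is the graph of a function. -/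
lemma aux_carrier_fun_aux {i j : ℕ} (hij : i ≤ j) (hj : j + 1 < T.n)
    {t t' : ℝ × ℝ} (ht : t ∈ T.edge i) (ht' : t' ∈ T.edge j) (hx : t.1 = t'.1) :
    t = t' := by
  have hi : i + 1 < T.n := by omega
  rcases eq_or_lt_of_le hij with rfl | hij
  · obtain ⟨a, b, ha, hb, hab, rfl⟩ := ht
    obtain ⟨a', b', ha', hb', hab', rfl⟩ := ht'
    have hlt : (T.v i).1 < (T.v (i + 1)).1 := T.mono i (i + 1) (Nat.lt_succ_self i) hi
    simp only [Prod.fst_add, Prod.smul_fst, smul_eq_mul] at hx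
    have hb2 : b = 1 - a := by linarith
    have hb2' : b' = 1 - a' := by linarith
    rw [hb2, hb2'] at hx ⊢
    have hz : (a - a') * ((T.v i).1 - (T.v (i + 1)).1) = 0 := by linear_combination hx
    rcases mul_eq_zero.1 hz with h | h
    · have haa : a = a' := by linarith
      rw [haa]
    · exact absurd (by linarith : (T.v i).1 = (T.v (i + 1)).1) hlt.ne
  · -- i < j : forces t = v (i+1) = v j = t'
    obtain ⟨-, h2⟩ := aux_edge_x T hi ht
    obtain ⟨h3, -⟩ := aux_edge_x T hj ht'
    have hle : (T.v (i + 1)).1 ≤ (T.v j).1 := by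
      rcases eq_or_lt_of_le (show i + 1 ≤ j by omega) with h | h
      · rw [h]
      · exact le_of_lt (T.mono (i + 1) j h (by omega))
    have e1 : t.1 = (T.v (i + 1)).1 := le_antisymm h2 (by linarith)
    have e2 : t'.1 = (T.v j).1 := le_antisymm (by linarith) h3
    have e3 : (T.v (i + 1)).1 = (T.v j).1 := by linarith
    have hj' : i + 1 = j := by
      by_contra h
      exact absurd e3 (ne_of_lt (T.mono (i + 1) j (by omega) (by omega)))
    rw [aux_edge_right T hi ht e1, aux_edge_left T hj ht' e2, hj']

lemma aux_carrier_fun {t t' : ℝ × ℝ} (ht : t ∈ T.carrier) (ht' : t' ∈ T.carrier)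
    (hx : t.1 = t'.1) : t = t' := by
  obtain ⟨i, hi, hti⟩ := (aux_mem_carrier_iff T t).1 ht
  obtain ⟨j, hj, htj⟩ := (aux_mem_carrier_iff T t').1 ht'
  have hn := T.hn
  rcases le_total i j with h | h
  · exact aux_carrier_fun_aux T h (by omega) hti htj hx
  · exact (aux_carrier_fun_aux T h (by omega) htj hti hx.symm).symm

/-- Surjectivity: every `x` in the range is hit by a terrain point. -/
lemma aux_exists_carrier_x {x : ℝ} (h1 : (T.v 0).1 ≤ x) (h2 : x ≤ (T.v (T.n - 1)).1) :
    ∃ t ∈ T.carrier, t.1 = x := by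
  have hn := T.hn
  have key : ∀ m : ℕ, m < T.n → x ≤ (T.v m).1 → ∃ t ∈ T.carrier, t.1 = x := by
    intro m
    induction m with
    | zero =>
      intro hm hx
      refine ⟨T.v 0, ?_, le_antisymm h1 hx⟩
      rw [aux_mem_carrier_iff]
      exact ⟨0, by omega, left_mem_segment ℝ _ _⟩
    | succ m ih =>
      intro hm hx
      rcases le_or_gt x ((T.v m).1) with h | h
      · exact ih (by omega) h
      · -- point on edge m
        have hlt : (T.v m).1 < (T.v (m + 1)).1 := T.mono m (m + 1) (Nat.lt_succ_self m) hm
        set d : ℝ := (T.v (m + 1)).1 - (T.v m).1 with hd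
        have hd0 : 0 < d := by rw [hd]; linarith
        set s : ℝ := (x - (T.v m).1) / d with hs
        have hs0 : 0 ≤ s := le_of_lt (div_pos (by linarith) hd0)
        have hs1 : s ≤ 1 := by
          rw [hs, div_le_one hd0, hd]; linarith
        refine ⟨(1 - s) • T.v m + s • T.v (m + 1), ?_, ?_⟩
        · rw [aux_mem_carrier_iff]
          exact ⟨m, by omega, ⟨1 - s, s, by linarith, hs0, by ring, rfl⟩⟩
        · simp only [Prod.fst_add, Prod.smul_fst, smul_eq_mul]
          have hsd : s * d = x - (T.v m).1 := by
            rw [hs]; field_simp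
          rw [hd] at hsd
          linear_combination hsd
  exact key (T.n - 1) (by omega) h2

end Aux

/-- The visibility region `V(p)` is a closed subset of `ℝ²`. -/
theorem vis_isClosed (T : Terrain) (p : ℝ × ℝ) (hp : p ∈ T.carrier) :
    IsClosed (T.vis p) := by
  classical
  have hcc : IsCompact T.carrier := aux_carrier_compact T
  have hclosed : IsClosed T.carrier := hcc.isClosed
  apply IsSeqClosed.isClosed
  intro qs q hqs hq
  have hqcar : q ∈ T.carrier :=
    hclosed.mem_of_tendsto hq (Filter.Eventually.of_forall fun n => (hqs n).1)
  refine ⟨hqcar, ?_⟩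
  rintro z ⟨a, b, ha, hb, hab, rfl⟩ t ht ht1
  set z : ℝ × ℝ := a • p + b • q with hz
  set zs : ℕ → ℝ × ℝ := fun n => a • p + b • qs n with hzs
  have hzs_mem : ∀ n, zs n ∈ segment ℝ p (qs n) := fun n => ⟨a, b, ha, hb, hab, rfl⟩
  have hzs_tendsto : Filter.Tendsto zs Filter.atTop (nhds z) := by
    rw [hz, hzs]
    exact Filter.Tendsto.add tendsto_const_nhds (hq.const_smul b)
  have hrange : ∀ n, (T.v 0).1 ≤ (zs n).1 ∧ (zs n).1 ≤ (T.v (T.n - 1)).1 := by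
    intro n
    obtain ⟨hp1, hp2⟩ := aux_carrier_x_range T hp
    obtain ⟨hq1, hq2⟩ := aux_carrier_x_range T (hqs n).1
    have h := (convex_Icc (T.v 0).1 (T.v (T.n - 1)).1).segment_subset
      ⟨hp1, hp2⟩ ⟨hq1, hq2⟩ (aux_seg_fst (hzs_mem n))
    exact ⟨h.1, h.2⟩
  have hts : ∀ n, ∃ t' ∈ T.carrier, t'.1 = (zs n).1 := fun n =>
    aux_exists_carrier_x T (hrange n).1 (hrange n).2
  choose ts hts_mem hts_x using hts
  have hsees : ∀ n, (ts n).2 ≤ (zs n).2 := fun n =>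
    (hqs n).2 (zs n) (hzs_mem n) (ts n) (hts_mem n) (hts_x n)
  have hts_tendsto : Filter.Tendsto ts Filter.atTop (nhds t) := by
    apply Filter.tendsto_of_subseq_tendsto
    intro ns hns
    obtain ⟨t', ht'c, φ, hφ, hφt⟩ := hcc.tendsto_subseq (x := fun n => ts (ns n))
      (fun n => hts_mem (ns n))
    refine ⟨φ, ?_⟩
    have hx' : t'.1 = z.1 := by
      have h1 : Filter.Tendsto (fun k => (ts (ns (φ k))).1) Filter.atTop (nhds t'.1) :=
        (continuous_fst.tendsto t').comp hφt
      have h2 : Filter.Tendsto (fun k => (zs (ns (φ k))).1) Filter.atTop (nhds z.1) :=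
        ((continuous_fst.tendsto z).comp hzs_tendsto).comp (hns.comp hφ.tendsto_atTop)
      have heq : (fun k => (ts (ns (φ k))).1) = fun k => (zs (ns (φ k))).1 := by
        funext k; exact hts_x _
      rw [heq] at h1
      exact tendsto_nhds_unique h1 h2
    have htt : t' = t := aux_carrier_fun T ht'c ht (by rw [hx', ht1])
    rw [htt] at hφt
    exact hφt
  have h1 : Filter.Tendsto (fun n => (ts n).2) Filter.atTop (nhds t.2) :=
    (continuous_snd.tendsto t).comp hts_tendsto
  have h2 : Filter.Tendsto (fun n => (zs n).2) Filter.atTop (nhds z.2) :=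
    (continuous_snd.tendsto z).comp hzs_tendsto
  exact le_of_tendsto_of_tendsto h1 h2 (Filter.Eventually.of_forall hsees)
end

section
/- Let T be a terrain with n vertices. Then the set U is finite and |U| ≤ 2n² + n. -/
open Set

section Aux

lemma seg_point (r s z : ℝ × ℝ) (hrs : r.1 < s.1) (h1 : r.1 ≤ z.1) (h2 : z.1 ≤ s.1)
    (hcross : 0 ≤ (z.2 - r.2) * (s.1 - r.1) - (z.1 - r.1) * (s.2 - r.2)) :
    ∃ w ∈ segment ℝ r s, w.1 = z.1 ∧ w.2 ≤ z.2 := by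
  have hs : 0 < s.1 - r.1 := by linarith
  set t : ℝ := (z.1 - r.1) / (s.1 - r.1) with ht
  have ht0 : 0 ≤ t := div_nonneg (by linarith) hs.le
  have ht1 : t ≤ 1 := (div_le_one hs).mpr (by linarith)
  have h3 : t * (s.1 - r.1) = z.1 - r.1 := div_mul_cancel₀ _ hs.ne'
  have h5 : t * (s.2 - r.2) * (s.1 - r.1) = (z.1 - r.1) * (s.2 - r.2) := by
    linear_combination (s.2 - r.2) * h3
  have h6 : 0 ≤ (z.2 - r.2 - t * (s.2 - r.2)) * (s.1 - r.1) := by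
    nlinarith [hcross, h5]
  have h7 : 0 ≤ z.2 - r.2 - t * (s.2 - r.2) := by
    by_contra hcon
    push_neg at hcon
    nlinarith [mul_neg_of_neg_of_pos hcon hs]
  refine ⟨(1 - t) • r + t • s, ⟨1 - t, t, by linarith, ht0, by ring, rfl⟩, ?_, ?_⟩
  · simp only [Prod.fst_add, Prod.smul_fst, smul_eq_mul]
    nlinarith [h3]
  · simp only [Prod.snd_add, Prod.smul_snd, smul_eq_mul]
    nlinarith [h7]

lemma seg_x_between {r s w : ℝ × ℝ} (hw : w ∈ segment ℝ r s) (h : r.1 ≤ s.1) :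
    r.1 ≤ w.1 ∧ w.1 ≤ s.1 := by
  obtain ⟨a, b, ha, hb, hab, rfl⟩ := hw
  have haeq : a = 1 - b := by linarith
  subst haeq
  constructor <;> simp only [Prod.fst_add, Prod.smul_fst, smul_eq_mul] <;>
    nlinarith [mul_nonneg hb (sub_nonneg.mpr h)]

lemma seg_x_inj {r s w w' : ℝ × ℝ} (hrs : r.1 < s.1) (hw : w ∈ segment ℝ r s)
    (hw' : w' ∈ segment ℝ r s) (hx : w.1 = w'.1) : w = w' := by
  obtain ⟨a, b, ha, hb, hab, rfl⟩ := hw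
  obtain ⟨a', b', ha', hb', hab', rfl⟩ := hw'
  simp only [Prod.fst_add, Prod.smul_fst, smul_eq_mul] at hx
  have haeq : a = 1 - b := by linarith
  have haeq' : a' = 1 - b' := by linarith
  subst haeq; subst haeq'
  have hbb : b = b' := by
    have h0 : (b - b') * (s.1 - r.1) = 0 := by linear_combination hx
    rcases mul_eq_zero.mp h0 with h | h
    · linarith
    · linarith
  rw [hbb]

lemma bottom_sorted (u m v z : ℝ × ℝ) (a b c : ℝ)
    (ha : 0 ≤ a) (hb : 0 ≤ b) (hc : 0 ≤ c) (habc : a + b + c = 1)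
    (hx1 : z.1 = a * u.1 + b * m.1 + c * v.1)
    (hy1 : z.2 = a * u.2 + b * m.2 + c * v.2)
    (hum : u.1 ≤ m.1) (hmv : m.1 ≤ v.1) :
    ∃ w : ℝ × ℝ, (w ∈ segment ℝ u m ∨ w ∈ segment ℝ u v ∨ w ∈ segment ℝ m v) ∧
      w.1 = z.1 ∧ w.2 ≤ z.2 := by
  have ha' : a = 1 - b - c := by linarith
  subst ha'
  have e1 : (0:ℝ) ≤ b * (m.1 - u.1) := mul_nonneg hb (by linarith)
  have e2 : (0:ℝ) ≤ c * (v.1 - u.1) := mul_nonneg hc (by linarith)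
  have e3 : (0:ℝ) ≤ b * (v.1 - m.1) := mul_nonneg hb (by linarith)
  have e4 : (0:ℝ) ≤ (1 - b - c) * (v.1 - u.1) := mul_nonneg ha (by linarith)
  have hzu : u.1 ≤ z.1 := by nlinarith [e1, e2]
  have hzv : z.1 ≤ v.1 := by nlinarith [e3, e4]
  rcases eq_or_lt_of_le (hum.trans hmv) with huv | huv
  · -- all x-coordinates equal
    have hmu : m.1 = u.1 := le_antisymm (huv ▸ hmv) hum
    have hz1 : z.1 = u.1 := by rw [hx1, hmu, ← huv]; ring
    rcases le_total u.2 m.2 with h1 | h1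
    · rcases le_total u.2 v.2 with h2 | h2
      · refine ⟨u, Or.inl (left_mem_segment ℝ _ _), hz1.symm, ?_⟩
        have f1 : (0:ℝ) ≤ b * (m.2 - u.2) := mul_nonneg hb (by linarith)
        have f2 : (0:ℝ) ≤ c * (v.2 - u.2) := mul_nonneg hc (by linarith)
        nlinarith [f1, f2]
      · refine ⟨v, Or.inr (Or.inl (right_mem_segment ℝ _ _)), by rw [hz1, huv], ?_⟩
        have f1 : (0:ℝ) ≤ b * (m.2 - v.2) := mul_nonneg hb (by linarith)
        have f2 : (0:ℝ) ≤ (1 - b - c) * (u.2 - v.2) := mul_nonneg ha (by linarith)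
        nlinarith [f1, f2]
    · rcases le_total m.2 v.2 with h2 | h2
      · refine ⟨m, Or.inl (right_mem_segment ℝ _ _), by rw [hz1, hmu], ?_⟩
        have f1 : (0:ℝ) ≤ c * (v.2 - m.2) := mul_nonneg hc (by linarith)
        have f2 : (0:ℝ) ≤ (1 - b - c) * (u.2 - m.2) := mul_nonneg ha (by linarith)
        nlinarith [f1, f2]
      · refine ⟨v, Or.inr (Or.inl (right_mem_segment ℝ _ _)), by rw [hz1, huv], ?_⟩
        have f1 : (0:ℝ) ≤ b * (m.2 - v.2) := mul_nonneg hb (by linarith)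
        have f2 : (0:ℝ) ≤ (1 - b - c) * (u.2 - v.2) := mul_nonneg ha (by linarith)
        nlinarith [f1, f2]
  · -- u.1 < v.1
    set phim : ℝ := (m.2 - u.2) * (v.1 - u.1) - (m.1 - u.1) * (v.2 - u.2) with hphim
    have key : (z.2 - u.2) * (v.1 - u.1) - (z.1 - u.1) * (v.2 - u.2) = b * phim := by
      rw [hx1, hy1, hphim]; ring
    by_cases hphi : 0 ≤ (z.2 - u.2) * (v.1 - u.1) - (z.1 - u.1) * (v.2 - u.2)
    · obtain ⟨w, hw, hwx, hwy⟩ := seg_point u v z huv hzu hzv hphi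
      exact ⟨w, Or.inr (Or.inl hw), hwx, hwy⟩
    · push_neg at hphi
      have hbpos : 0 < b := by
        rcases hb.lt_or_eq with h | h
        · exact h
        · exfalso; rw [← h] at key; simp at key; linarith
      have hphimneg : phim < 0 := by nlinarith [key]
      rcases le_or_gt z.1 m.1 with hzm | hzm
      · rcases eq_or_lt_of_le hum with hum' | hum'
        · -- u.1 = m.1, so z.1 = u.1 and c = 0
          have hz1 : z.1 = u.1 := le_antisymm (hum' ▸ hzm) hzu
          have h9 : c * (v.1 - u.1) = 0 := by linear_combination hz1 - hx1 + b * hum'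
          have hc0 : c = 0 := by
            rcases mul_eq_zero.mp h9 with h | h
            · exact h
            · exfalso; linarith
          refine ⟨z, Or.inl ⟨1 - b - c, b, ha, hb, by linarith, ?_⟩, rfl, le_refl _⟩
          rw [Prod.ext_iff]
          simp only [Prod.fst_add, Prod.smul_fst, Prod.snd_add, Prod.smul_snd, smul_eq_mul]
          constructor
          · rw [hx1, hc0, hum']; ring
          · rw [hy1, hc0]; ring
        · -- u.1 < m.1: use segment [u, m]
          have hpsi : 0 ≤ (z.2 - u.2) * (m.1 - u.1) - (z.1 - u.1) * (m.2 - u.2) := by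
            have key2 : (z.2 - u.2) * (m.1 - u.1) - (z.1 - u.1) * (m.2 - u.2)
                = c * (-phim) := by rw [hx1, hy1, hphim]; ring
            rw [key2]
            exact mul_nonneg hc (by linarith)
          obtain ⟨w, hw, hwx, hwy⟩ := seg_point u m z hum' hzu hzm hpsi
          exact ⟨w, Or.inl hw, hwx, hwy⟩
      · -- m.1 < z.1 ≤ v.1: use segment [m, v]
        have hmv' : m.1 < v.1 := hzm.trans_le hzv
        have hchi : 0 ≤ (z.2 - m.2) * (v.1 - m.1) - (z.1 - m.1) * (v.2 - m.2) := by
          have key3 : (z.2 - m.2) * (v.1 - m.1) - (z.1 - m.1) * (v.2 - m.2)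
              = (1 - b - c) * (-phim) := by rw [hx1, hy1, hphim]; ring
          rw [key3]
          exact mul_nonneg ha (by linarith)
        obtain ⟨w, hw, hwx, hwy⟩ := seg_point m v z hmv' hzm.le hzv hchi
        exact ⟨w, Or.inr (Or.inr hw), hwx, hwy⟩

lemma bottom_aux (p q1 q2 z : ℝ × ℝ) (a b c : ℝ)
    (ha : 0 ≤ a) (hb : 0 ≤ b) (hc : 0 ≤ c) (habc : a + b + c = 1)
    (hx1 : z.1 = a * p.1 + b * q1.1 + c * q2.1)
    (hy1 : z.2 = a * p.2 + b * q1.2 + c * q2.2)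
    (h12 : q1.1 ≤ q2.1) :
    ∃ w : ℝ × ℝ, (w ∈ segment ℝ p q1 ∨ w ∈ segment ℝ p q2 ∨ w ∈ segment ℝ q1 q2) ∧
      w.1 = z.1 ∧ w.2 ≤ z.2 := by
  rcases le_total p.1 q1.1 with h | h
  · obtain ⟨w, hw, hwx, hwy⟩ :=
      bottom_sorted p q1 q2 z a b c ha hb hc habc hx1 hy1 h h12
    exact ⟨w, hw, hwx, hwy⟩
  · rcases le_total p.1 q2.1 with h' | h'
    · obtain ⟨w, hw, hwx, hwy⟩ :=
        bottom_sorted q1 p q2 z b a c hb ha hc (by linarith)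
          (by rw [hx1]; ring) (by rw [hy1]; ring) h h'
      rcases hw with hw | hw | hw
      · exact ⟨w, Or.inl (by rwa [segment_symm]), hwx, hwy⟩
      · exact ⟨w, Or.inr (Or.inr hw), hwx, hwy⟩
      · exact ⟨w, Or.inr (Or.inl hw), hwx, hwy⟩
    · obtain ⟨w, hw, hwx, hwy⟩ :=
        bottom_sorted q1 q2 p z b c a hb hc ha (by linarith)
          (by rw [hx1]; ring) (by rw [hy1]; ring) h12 h'
      rcases hw with hw | hw | hw
      · exact ⟨w, Or.inr (Or.inr hw), hwx, hwy⟩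
      · exact ⟨w, Or.inl (by rwa [segment_symm]), hwx, hwy⟩
      · exact ⟨w, Or.inr (Or.inl (by rwa [segment_symm])), hwx, hwy⟩

lemma bottom (p q1 q2 z : ℝ × ℝ) (a b c : ℝ)
    (ha : 0 ≤ a) (hb : 0 ≤ b) (hc : 0 ≤ c) (habc : a + b + c = 1)
    (hx1 : z.1 = a * p.1 + b * q1.1 + c * q2.1)
    (hy1 : z.2 = a * p.2 + b * q1.2 + c * q2.2) :
    ∃ w : ℝ × ℝ, (w ∈ segment ℝ p q1 ∨ w ∈ segment ℝ p q2 ∨ w ∈ segment ℝ q1 q2) ∧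
      w.1 = z.1 ∧ w.2 ≤ z.2 := by
  rcases le_total q1.1 q2.1 with h | h
  · exact bottom_aux p q1 q2 z a b c ha hb hc habc hx1 hy1 h
  · obtain ⟨w, hw, hwx, hwy⟩ :=
      bottom_aux p q2 q1 z a c b ha hc hb (by linarith)
        (by rw [hx1]; ring) (by rw [hy1]; ring) h
    rcases hw with hw | hw | hw
    · exact ⟨w, Or.inr (Or.inl hw), hwx, hwy⟩
    · exact ⟨w, Or.inl hw, hwx, hwy⟩
    · exact ⟨w, Or.inr (Or.inr (by rwa [segment_symm])), hwx, hwy⟩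

namespace Terrain

lemma edge_mono (T : Terrain) {i : ℕ} (hi : i < T.n - 1) : (T.v i).1 < (T.v (i+1)).1 :=
  T.mono i (i+1) (Nat.lt_succ_self i) (by omega)

lemma edge_subset_carrier (T : Terrain) {i : ℕ} (hi : i < T.n - 1) :
    T.edge i ⊆ T.carrier := by
  intro x hx
  exact Set.mem_biUnion (Finset.mem_range.mpr hi) hx

lemma mem_carrier (T : Terrain) {x : ℝ × ℝ} (hx : x ∈ T.carrier) :
    ∃ i, i < T.n - 1 ∧ x ∈ T.edge i := by
  simp only [carrier, Set.mem_iUnion, Finset.mem_range, exists_prop] at hx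
  exact hx

lemma carrier_x_inj_aux (T : Terrain) {i j : ℕ} (hij : i ≤ j) (hi : i < T.n - 1)
    (hj : j < T.n - 1) {s t : ℝ × ℝ} (hs : s ∈ T.edge i) (ht : t ∈ T.edge j)
    (hx : s.1 = t.1) : s = t := by
  have hvi := T.edge_mono hi
  have hvj := T.edge_mono hj
  rcases eq_or_lt_of_le hij with rfl | hlt
  · exact seg_x_inj hvi hs ht hx
  · -- i < j, so i + 1 ≤ j
    have h1 : i + 1 ≤ j := hlt
    have hs2 := seg_x_between hs hvi.le
    have ht2 := seg_x_between ht hvj.le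
    have h3 : (T.v (i+1)).1 ≤ (T.v j).1 := by
      rcases eq_or_lt_of_le h1 with rfl | h
      · exact le_refl _
      · exact (T.mono (i+1) j h (by omega)).le
    have hseq : s.1 = (T.v (i+1)).1 := le_antisymm hs2.2 (by linarith [ht2.1, hx])
    have hteq : t.1 = (T.v j).1 := le_antisymm (by linarith [hs2.2, hx]) ht2.1
    have hjeq : (T.v (i+1)).1 = (T.v j).1 := by linarith
    have hij2 : i + 1 = j := by
      rcases eq_or_lt_of_le h1 with h | h
      · exact h
      · exact absurd (T.mono (i+1) j h (by omega)) (by rw [hjeq]; exact lt_irrefl _)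
    have hs3 : s = T.v (i+1) := seg_x_inj hvi hs (right_mem_segment ℝ _ _) hseq
    have ht3 : t = T.v j := seg_x_inj hvj ht (left_mem_segment ℝ _ _) hteq
    rw [hs3, ht3, hij2]

lemma carrier_x_inj (T : Terrain) {s t : ℝ × ℝ} (hs : s ∈ T.carrier) (ht : t ∈ T.carrier)
    (hx : s.1 = t.1) : s = t := by
  obtain ⟨i, hi, hsi⟩ := T.mem_carrier hs
  obtain ⟨j, hj, htj⟩ := T.mem_carrier ht
  rcases le_total i j with h | h
  · exact T.carrier_x_inj_aux h hi hj hsi htj hx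
  · exact (T.carrier_x_inj_aux h hj hi htj hsi hx.symm).symm


lemma sees_convex (T : Terrain) {p q1 q2 q : ℝ × ℝ} (h1 : T.sees p q1) (h2 : T.sees p q2)
    (hsub : segment ℝ q1 q2 ⊆ T.carrier) (hq : q ∈ segment ℝ q1 q2) : T.sees p q := by
  intro z hz t ht htx
  obtain ⟨d, e, hd, he, hde, hzeq⟩ := hz
  obtain ⟨f, g, hf, hg, hfg, hqeq⟩ := hq
  have hz1 : d * p.1 + e * q.1 = z.1 := by
    have := congrArg Prod.fst hzeq
    simpa [Prod.fst_add, Prod.smul_fst, smul_eq_mul] using this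
  have hz2 : d * p.2 + e * q.2 = z.2 := by
    have := congrArg Prod.snd hzeq
    simpa [Prod.snd_add, Prod.smul_snd, smul_eq_mul] using this
  have hq1 : f * q1.1 + g * q2.1 = q.1 := by
    have := congrArg Prod.fst hqeq
    simpa [Prod.fst_add, Prod.smul_fst, smul_eq_mul] using this
  have hq2 : f * q1.2 + g * q2.2 = q.2 := by
    have := congrArg Prod.snd hqeq
    simpa [Prod.snd_add, Prod.smul_snd, smul_eq_mul] using this
  obtain ⟨w, hw, hwx, hwy⟩ := bottom p q1 q2 z d (e * f) (e * g)
    hd (mul_nonneg he hf) (mul_nonneg he hg) (by nlinarith)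
    (by nlinarith) (by nlinarith)
  rcases hw with hw | hw | hw
  · exact le_trans (h1 w hw t ht (htx.trans hwx.symm)) hwy
  · exact le_trans (h2 w hw t ht (htx.trans hwx.symm)) hwy
  · have : t = w := T.carrier_x_inj ht (hsub hw) (htx.trans hwx.symm)
    rw [this]
    exact hwy

lemma vis_inter_edge_convex (T : Terrain) (p : ℝ × ℝ) {i : ℕ} (hi : i < T.n - 1) :
    Convex ℝ (T.vis p ∩ T.edge i) := by
  rw [convex_iff_segment_subset]
  rintro q1 ⟨hq1v, hq1e⟩ q2 ⟨hq2v, hq2e⟩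
  have hedge : segment ℝ q1 q2 ⊆ T.edge i :=
    (convex_segment (T.v i) (T.v (i+1))).segment_subset hq1e hq2e
  have hcar : segment ℝ q1 q2 ⊆ T.carrier := fun x hx => by
    refine Set.mem_biUnion (Finset.mem_range.mpr hi) (hedge hx)
  intro q hq
  refine ⟨⟨hcar hq, ?_⟩, hedge hq⟩
  exact T.sees_convex hq1v.2 hq2v.2 hcar hq

open Classical in
/-- Two extremal points of the same type on the same edge coincide. -/
lemma extremal_finite (T : Terrain) (p : ℝ × ℝ) :
    {q | T.Extremal p q}.Finite ∧ {q | T.Extremal p q}.ncard ≤ 2 * (T.n - 1) := by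
  classical
  set E := {q | T.Extremal p q} with hE
  have hEvis : ∀ q ∈ E, q ∈ T.vis p := fun q hq => hq.1
  have hEcar : ∀ q ∈ E, q ∈ T.carrier := fun q hq => hq.1.1
  set f : ℝ × ℝ → ℕ × Bool := fun q =>
    (if h : ∃ i, i < T.n - 1 ∧ q ∈ T.edge i then Nat.find h else 0,
     if (∀ r ∈ connectedComponentIn (T.vis p) q, r.1 ≤ q.1) then true else false) with hf
  -- key: same edge + same type implies equal
  have hkey : ∀ q ∈ E, ∀ q' ∈ E, ∀ i, i < T.n - 1 → q ∈ T.edge i → q' ∈ T.edge i →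
      f q = f q' → q = q' := by
    intro q hq q' hq' i hi hqi hq'i hfq
    have hconv := T.vis_inter_edge_convex p hi
    have hpre : IsPreconnected (T.vis p ∩ T.edge i) := hconv.isPreconnected
    have hmemq : q ∈ T.vis p ∩ T.edge i := ⟨hEvis q hq, hqi⟩
    have hmemq' : q' ∈ T.vis p ∩ T.edge i := ⟨hEvis q' hq', hq'i⟩
    have hs1 : T.vis p ∩ T.edge i ⊆ connectedComponentIn (T.vis p) q :=
      hpre.subset_connectedComponentIn hmemq (inter_subset_left)
    have hs2 : T.vis p ∩ T.edge i ⊆ connectedComponentIn (T.vis p) q' :=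
      hpre.subset_connectedComponentIn hmemq' (inter_subset_left)
    have hxeq : q.1 = q'.1 := by
      have hb : (if (∀ r ∈ connectedComponentIn (T.vis p) q, r.1 ≤ q.1) then true else false)
          = (if (∀ r ∈ connectedComponentIn (T.vis p) q', r.1 ≤ q'.1) then true else false) :=
        congrArg Prod.snd hfq
      by_cases h1 : ∀ r ∈ connectedComponentIn (T.vis p) q, r.1 ≤ q.1
      · have h2 : ∀ r ∈ connectedComponentIn (T.vis p) q', r.1 ≤ q'.1 := by
          by_contra h2
          rw [if_pos h1, if_neg h2] at hb
          exact Bool.noConfusion hb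
        exact le_antisymm (h2 q (hs2 hmemq)) (h1 q' (hs1 hmemq'))
      · have h2 : ¬ ∀ r ∈ connectedComponentIn (T.vis p) q', r.1 ≤ q'.1 := by
          intro h2
          rw [if_neg h1, if_pos h2] at hb
          exact Bool.noConfusion hb
        have h1' : ∀ r ∈ connectedComponentIn (T.vis p) q, q.1 ≤ r.1 := hq.2.resolve_left h1
        have h2' : ∀ r ∈ connectedComponentIn (T.vis p) q', q'.1 ≤ r.1 := hq'.2.resolve_left h2
        exact le_antisymm (h1' q' (hs1 hmemq')) (h2' q (hs2 hmemq))
    exact T.carrier_x_inj (hEcar q hq) (hEcar q' hq') hxeq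
  have hinj : Set.InjOn f E := by
    intro q hq q' hq' hfq
    have hexq : ∃ i, i < T.n - 1 ∧ q ∈ T.edge i := T.mem_carrier (hEcar q hq)
    have hexq' : ∃ i, i < T.n - 1 ∧ q' ∈ T.edge i := T.mem_carrier (hEcar q' hq')
    have h1 : f q = (Nat.find hexq,
        if (∀ r ∈ connectedComponentIn (T.vis p) q, r.1 ≤ q.1) then true else false) := by
      simp only [hf, dif_pos hexq]
    have h1' : f q' = (Nat.find hexq',
        if (∀ r ∈ connectedComponentIn (T.vis p) q', r.1 ≤ q'.1) then true else false) := by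
      simp only [hf, dif_pos hexq']
    have hieq : Nat.find hexq = Nat.find hexq' := by
      have := congrArg Prod.fst hfq
      rw [h1, h1'] at hfq
      exact congrArg Prod.fst hfq
    obtain ⟨hilt, hqi⟩ := Nat.find_spec hexq
    obtain ⟨hilt', hqi'⟩ := Nat.find_spec hexq'
    rw [← hieq] at hqi'
    exact hkey q hq q' hq' (Nat.find hexq) hilt hqi hqi' hfq
  have himg : f '' E ⊆ ↑(Finset.range (T.n - 1) ×ˢ (Finset.univ : Finset Bool)) := by
    rintro _ ⟨q, hq, rfl⟩
    have hexq : ∃ i, i < T.n - 1 ∧ q ∈ T.edge i := T.mem_carrier (hEcar q hq)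
    simp only [hf, dif_pos hexq, Finset.coe_product, Set.mem_prod, Finset.mem_coe,
      Finset.mem_range, Finset.mem_univ, and_true]
    exact (Nat.find_spec hexq).1
  have hfinimg : (f '' E).Finite :=
    (Finset.finite_toSet _).subset himg
  have hEfin : E.Finite := Set.Finite.of_finite_image hfinimg hinj
  refine ⟨hEfin, ?_⟩
  have h2 : E.ncard = (f '' E).ncard := (Set.ncard_image_of_injOn hinj).symm
  rw [h2]
  calc (f '' E).ncard ≤ (↑(Finset.range (T.n - 1) ×ˢ (Finset.univ : Finset Bool)) :
        Set (ℕ × Bool)).ncard := Set.ncard_le_ncard himg (Finset.finite_toSet _)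
    _ = (T.n - 1) * 2 := by
        rw [Set.ncard_coe_finset, Finset.card_product, Finset.card_range, Finset.card_univ,
          Fintype.card_bool]
    _ ≤ 2 * (T.n - 1) := by omega

end Terrain

end Aux


/-- The guard candidate set `U` is finite with `|U| ≤ 2n² + n`. -/
theorem Uset_finite_card (T : Terrain) :
    T.Uset.Finite ∧ T.Uset.ncard ≤ 2 * T.n ^ 2 + T.n := by
  classical
  have hV : T.vertexSet = T.v '' ↑(Finset.range T.n) := by
    ext p
    simp only [Terrain.vertexSet, Set.mem_setOf_eq, Set.mem_image, Finset.coe_range,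
      Set.mem_Iio]
    constructor
    · rintro ⟨i, hi, rfl⟩; exact ⟨i, hi, rfl⟩
    · rintro ⟨i, hi, rfl⟩; exact ⟨i, hi, rfl⟩
  have hVfin : T.vertexSet.Finite := by
    rw [hV]; exact (Finset.finite_toSet _).image _
  have hVcard : T.vertexSet.ncard ≤ T.n := by
    rw [hV]
    calc (T.v '' ↑(Finset.range T.n)).ncard ≤ (↑(Finset.range T.n) : Set ℕ).ncard :=
        Set.ncard_image_le (Finset.finite_toSet _)
      _ = T.n := by rw [Set.ncard_coe_finset, Finset.card_range]
  have hfin : ∀ i, ({q | T.Extremal (T.v i) q}).Finite := fun i =>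
    (T.extremal_finite (T.v i)).1
  set F : ℕ → Finset (ℝ × ℝ) := fun i => (hfin i).toFinset with hF
  have hB : (⋃ i ∈ Finset.range T.n, {q | T.Extremal (T.v i) q})
      = ↑((Finset.range T.n).biUnion F) := by
    ext q
    simp only [Set.mem_iUnion, Finset.coe_biUnion, Finset.mem_coe, Finset.mem_biUnion,
      hF, Set.Finite.mem_toFinset, Set.mem_setOf_eq, exists_prop, Finset.mem_range]
  have hBfin : (⋃ i ∈ Finset.range T.n, {q | T.Extremal (T.v i) q}).Finite := by
    rw [hB]; exact Finset.finite_toSet _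
  have hBcard : (⋃ i ∈ Finset.range T.n, {q | T.Extremal (T.v i) q}).ncard
      ≤ T.n * (2 * (T.n - 1)) := by
    rw [hB, Set.ncard_coe_finset]
    calc ((Finset.range T.n).biUnion F).card ≤ ∑ i ∈ Finset.range T.n, (F i).card :=
        Finset.card_biUnion_le
      _ ≤ ∑ _i ∈ Finset.range T.n, 2 * (T.n - 1) := by
          apply Finset.sum_le_sum
          intro i _
          have := (T.extremal_finite (T.v i)).2
          rwa [Set.ncard_eq_toFinset_card _ (hfin i)] at this
      _ = T.n * (2 * (T.n - 1)) := by rw [Finset.sum_const, Finset.card_range, smul_eq_mul]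
  constructor
  · exact hVfin.union hBfin
  · calc T.Uset.ncard ≤ T.vertexSet.ncard
          + (⋃ i ∈ Finset.range T.n, {q | T.Extremal (T.v i) q}).ncard :=
        Set.ncard_union_le _ _
      _ ≤ T.n + T.n * (2 * (T.n - 1)) := add_le_add hVcard hBcard
      _ ≤ T.n + T.n * (2 * T.n) := by
          gcongr
          omega
      _ = 2 * T.n ^ 2 + T.n := by ring
end
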